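/- arXiv:1501.06982 — 7 statements merged into one kernel-verified Lean document; each statement's English description precedes it below -/
import Mathlib

section
/- Let A = ⊕_{i=0}^{c} Aᵢ be a graded Artinian K-algebra with the strong Lefschetz property and A_c ≠ 0. Suppose B ⊆ A is a graded K-subalgebra with B_c = A_c, B₁ contains a strong Lefschetz element of A, and B has a symmetric Hilbert function (dim B_i = dim B_{c−i} for all i). Then B has the strong Lefschetz property. -/
/-- Proposition 2.5 (Subring Theorem): if `A` is a graded Artinian `K`-algebra
with the strong Lefschetz property, `A_c ≠ 0` is the top degree, and `B` is a
graded subalgebra with `B_c = A_c` whose degree one part contains a strong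
Lefschetz element of `A`, and `B` has a symmetric Hilbert function, then `B`
has the strong Lefschetz property. -/
theorem subring_theorem
    (K A : Type*) [Field K] [CommRing A] [Algebra K A] [FiniteDimensional K A]
    (𝒜 : ℕ → Submodule K A) [GradedAlgebra 𝒜]
    (c : ℕ) (htop : ∀ i, c < i → 𝒜 i = ⊥) (hc : 𝒜 c ≠ ⊥)
    (B : Subalgebra K A)
    -- `B` is a graded subalgebra: it is spanned by its homogeneous parts
    (hBgr : Subalgebra.toSubmodule B = ⨆ i, (𝒜 i ⊓ Subalgebra.toSubmodule B))
    -- `B_c = A_c`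
    (hBc : 𝒜 c ≤ Subalgebra.toSubmodule B)
    -- `B₁` contains a strong Lefschetz element of `A`
    (l : A) (hl1 : l ∈ 𝒜 1) (hlB : l ∈ B)
    (hSLA : ∀ i ≤ c / 2,
      Set.BijOn (fun a => l ^ (c - 2 * i) * a) (𝒜 i) (𝒜 (c - i)))
    -- `B` has a symmetric Hilbert function
    (hsym : ∀ i ≤ c,
      Module.finrank K (𝒜 i ⊓ Subalgebra.toSubmodule B : Submodule K A)
        = Module.finrank K (𝒜 (c - i) ⊓ Subalgebra.toSubmodule B : Submodule K A)) :
    -- `B` has the strong Lefschetz property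
    ∃ m ∈ 𝒜 1 ⊓ Subalgebra.toSubmodule B, ∀ i ≤ c / 2,
      Set.BijOn (fun a => m ^ (c - 2 * i) * a)
        (𝒜 i ⊓ Subalgebra.toSubmodule B : Submodule K A)
        (𝒜 (c - i) ⊓ Subalgebra.toSubmodule B : Submodule K A) := by
  refine ⟨l, ⟨hl1, hlB⟩, fun i hi => ?_⟩
  have hic : i ≤ c := le_trans hi (Nat.div_le_self c 2)
  have h2i : 2 * i ≤ c := by
    have := Nat.div_mul_le_self c 2
    omega
  set n := c - 2 * i with hn
  have hln : l ^ n ∈ 𝒜 n := by simpa using SetLike.pow_mem_graded n hl1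
  have hmaps : ∀ x ∈ (𝒜 i ⊓ Subalgebra.toSubmodule B : Submodule K A),
      l ^ n * x ∈ (𝒜 (c - i) ⊓ Subalgebra.toSubmodule B : Submodule K A) := by
    rintro x ⟨hx1, hx2⟩
    refine ⟨?_, B.mul_mem (B.pow_mem hlB n) hx2⟩
    have := SetLike.mul_mem_graded hln hx1
    have hni : n + i = c - i := by omega
    rwa [hni] at this
  set S := (𝒜 i ⊓ Subalgebra.toSubmodule B : Submodule K A)
  set T := (𝒜 (c - i) ⊓ Subalgebra.toSubmodule B : Submodule K A)
  let f : S →ₗ[K] T := (LinearMap.mulLeft K (l ^ n)).restrict hmaps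
  have hinjA : Set.InjOn (fun a => l ^ n * a) (𝒜 i) := (hSLA i hi).injOn
  have hfinj : Function.Injective f := by
    intro x y hxy
    have hx : (x : A) ∈ 𝒜 i := x.2.1
    have hy : (y : A) ∈ 𝒜 i := y.2.1
    have : l ^ n * (x : A) = l ^ n * (y : A) := congrArg Subtype.val hxy
    exact Subtype.ext (hinjA hx hy this)
  have hdim : Module.finrank K S = Module.finrank K T := hsym i hic
  have hfsurj : Function.Surjective f :=
    (LinearMap.injective_iff_surjective_of_finrank_eq_finrank hdim).mp hfinj
  refine ⟨fun x hx => hmaps x hx, fun x hx y hy hxy => hinjA hx.1 hy.1 hxy, ?_⟩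
  rintro y hy
  obtain ⟨x, hxe⟩ := hfsurj ⟨y, hy⟩
  exact ⟨x, x.2, congrArg Subtype.val hxe⟩
end

section
/- Let K have characteristic zero and B = K[x₁,…,xₙ]/(x₁²,…,xₙ²). Then e₁ = x₁+⋯+xₙ is a strong Lefschetz element for B: multiplication by e₁^{n−2i} : Bᵢ → B_{n−i} is bijective for all i ≤ ⌊n/2⌋. -/
open MvPolynomial

set_option linter.unusedSectionVars false

open Finsupp

namespace SLPcore

variable {K : Type*} [Field K] [CharZero K] {n : ℕ}

variable (K n) in
noncomputable def Uop : (Finset (Fin n) →₀ K) →ₗ[K] (Finset (Fin n) →₀ K) :=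
  Finsupp.linearCombination K fun s => ∑ j ∈ sᶜ, Finsupp.single (insert j s) (1 : K)

variable (K n) in
noncomputable def Dop : (Finset (Fin n) →₀ K) →ₗ[K] (Finset (Fin n) →₀ K) :=
  Finsupp.linearCombination K fun s => ∑ j ∈ s, Finsupp.single (s.erase j) (1 : K)

lemma Uop_single (s : Finset (Fin n)) (c : K) :
    Uop K n (Finsupp.single s c) = ∑ j ∈ sᶜ, Finsupp.single (insert j s) c := by
  simp [Uop, Finsupp.linearCombination_single, Finset.smul_sum, Finsupp.smul_single]

lemma Dop_single (s : Finset (Fin n)) (c : K) :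
    Dop K n (Finsupp.single s c) = ∑ j ∈ s, Finsupp.single (s.erase j) c := by
  simp [Dop, Finsupp.linearCombination_single, Finset.smul_sum, Finsupp.smul_single]

variable (K n) in
noncomputable def Mdeg (i : ℕ) : Submodule K (Finset (Fin n) →₀ K) :=
  Finsupp.supported K K {s : Finset (Fin n) | s.card = i}

lemma single_mem_Mdeg {s : Finset (Fin n)} {i : ℕ} (h : s.card = i) (c : K) :
    Finsupp.single s c ∈ Mdeg K n i :=
  Finsupp.single_mem_supported K c h

lemma eq_on_Mdeg {W : Type*} [AddCommGroup W] [Module K W] {i : ℕ}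
    {T T' : (Finset (Fin n) →₀ K) →ₗ[K] W}
    (h : ∀ s : Finset (Fin n), s.card = i → T (Finsupp.single s 1) = T' (Finsupp.single s 1)) :
    ∀ v ∈ Mdeg K n i, T v = T' v := by
  intro v hv
  rw [← Finsupp.sum_single v, Finsupp.sum, map_sum, map_sum]
  refine Finset.sum_congr rfl fun s hs => ?_
  have h1 : Finsupp.single s (v s) = (v s) • Finsupp.single s (1 : K) := by
    simp [Finsupp.smul_single]
  rw [h1, map_smul, map_smul, h s (hv hs)]

lemma map_Mdeg_le {i j : ℕ} {T : (Finset (Fin n) →₀ K) →ₗ[K] (Finset (Fin n) →₀ K)}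
    (h : ∀ s : Finset (Fin n), s.card = i → T (Finsupp.single s 1) ∈ Mdeg K n j) :
    ∀ v ∈ Mdeg K n i, T v ∈ Mdeg K n j := by
  intro v hv
  have : Submodule.map T (Mdeg K n i) ≤ Mdeg K n j := by
    rw [Mdeg, Finsupp.supported_eq_span_single, Submodule.map_span, Submodule.span_le]
    rintro x ⟨y, ⟨s, hs, rfl⟩, rfl⟩
    exact h s hs
  exact this ⟨v, hv, rfl⟩

lemma Uop_mem {i : ℕ} : ∀ v ∈ Mdeg K n i, Uop K n v ∈ Mdeg K n (i + 1) := by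
  refine map_Mdeg_le fun s hs => ?_
  rw [Uop_single]
  refine Submodule.sum_mem _ fun j hj => single_mem_Mdeg ?_ _
  rw [Finset.card_insert_of_notMem (by simpa using hj), hs]

lemma Dop_mem {i : ℕ} : ∀ v ∈ Mdeg K n (i + 1), Dop K n v ∈ Mdeg K n i := by
  refine map_Mdeg_le fun s hs => ?_
  rw [Dop_single]
  refine Submodule.sum_mem _ fun j hj => single_mem_Mdeg ?_ _
  rw [Finset.card_erase_of_mem hj, hs]; rfl

lemma Dop_zero : ∀ v ∈ Mdeg K n 0, Dop K n v = 0 := by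
  have h := eq_on_Mdeg (K := K) (n := n) (i := 0)
    (T := Dop K n) (T' := 0) (fun s hs => ?_)
  · simpa using h
  · rw [Finset.card_eq_zero] at hs
    subst hs
    simp [Dop_single]

lemma comm_single (s : Finset (Fin n)) :
    Dop K n (Uop K n (Finsupp.single s (1:K))) =
      Uop K n (Dop K n (Finsupp.single s 1))
        + (((sᶜ.card : K)) - (s.card : K)) • Finsupp.single s 1 := by
  classical
  rw [Uop_single, Dop_single, map_sum, map_sum]
  have hL : ∀ j ∈ sᶜ, Dop K n (Finsupp.single (insert j s) (1:K)) =
      Finsupp.single s 1 + ∑ k ∈ s, Finsupp.single (insert j (s.erase k)) 1 := by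
    intro j hj
    have hjs : j ∉ s := by simpa using hj
    rw [Dop_single, Finset.sum_insert hjs, Finset.erase_insert hjs]
    congr 1
    refine Finset.sum_congr rfl fun k hk => ?_
    rw [Finset.erase_insert_of_ne (fun h => hjs (by rw [h]; exact hk))]
  have hR : ∀ k ∈ s, Uop K n (Finsupp.single (s.erase k) (1:K)) =
      Finsupp.single s 1 + ∑ j ∈ sᶜ, Finsupp.single (insert j (s.erase k)) 1 := by
    intro k hk
    have hks : k ∉ sᶜ := by simpa using hk
    rw [Uop_single, Finset.compl_erase, Finset.sum_insert hks, Finset.insert_erase hk]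
  rw [Finset.sum_congr rfl hL, Finset.sum_congr rfl hR]
  rw [Finset.sum_add_distrib, Finset.sum_add_distrib, Finset.sum_const, Finset.sum_const]
  rw [Finset.sum_comm]
  have hns : ∀ (m : ℕ), m • Finsupp.single s (1:K) = (m : K) • Finsupp.single s 1 := by
    intro m; rw [Nat.cast_smul_eq_nsmul]
  rw [hns, hns]
  module

end SLPcore
namespace SLPcore

variable {K : Type*} [Field K] [CharZero K] {n : ℕ}

lemma comm_Mdeg {i : ℕ} : ∀ v ∈ Mdeg K n i,
    Dop K n (Uop K n v) = Uop K n (Dop K n v) + ((n : K) - 2 * i) • v := by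
  have h := eq_on_Mdeg (K := K) (n := n) (i := i)
    (T := (Dop K n) ∘ₗ (Uop K n))
    (T' := (Uop K n) ∘ₗ (Dop K n) + ((n : K) - 2 * i) • LinearMap.id) (fun s hs => ?_)
  · intro v hv
    simpa using h v hv
  · have hle : s.card ≤ n := by
      simpa using Finset.card_le_univ s
    have hc : ((sᶜ.card : K)) - (s.card : K) = (n : K) - 2 * i := by
      rw [Finset.card_compl, Fintype.card_fin, Nat.cast_sub hle, hs]
      ring
    simp only [LinearMap.comp_apply, LinearMap.add_apply, LinearMap.smul_apply,
      LinearMap.id_apply]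
    rw [comm_single, hc]

lemma comm_pow {m : ℕ} : ∀ {i : ℕ}, ∀ v ∈ Mdeg K n i,
    Dop K n ((Uop K n ^ (m + 1)) v) =
      (Uop K n ^ (m + 1)) (Dop K n v)
        + (((m : K) + 1) * ((n : K) - 2 * i - m)) • (Uop K n ^ m) v := by
  induction m with
  | zero =>
      intro i v hv
      simpa using comm_Mdeg v hv
  | succ m ih =>
      intro i v hv
      have e1 : ∀ w, (Uop K n ^ (m + 2)) w = (Uop K n ^ (m + 1)) (Uop K n w) := fun w => by
        rw [pow_succ]; rfl
      have e2 : ∀ w, (Uop K n ^ (m + 1)) w = (Uop K n ^ m) (Uop K n w) := fun w => by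
        rw [pow_succ]; rfl
      have h2 := ih (Uop K n v) (Uop_mem v hv)
      rw [e1, h2, comm_Mdeg v hv, map_add, map_smul, ← e1, ← e2]
      push_cast
      match_scalars <;> ring

lemma prim {i : ℕ} (m : ℕ) : ∀ v ∈ Mdeg K n i, Dop K n v = 0 →
    (Dop K n ^ m) ((Uop K n ^ m) v)
      = (∏ j ∈ Finset.range m, (((j : K) + 1) * ((n : K) - 2 * i - j))) • v := by
  induction m with
  | zero => intro v hv hD; simp
  | succ m ih =>
      intro v hv hD
      have h1 : (Dop K n ^ (m + 1)) ((Uop K n ^ (m + 1)) v)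
          = (Dop K n ^ m) (Dop K n ((Uop K n ^ (m + 1)) v)) := by
        rw [pow_succ]; rfl
      rw [h1, comm_pow v hv, hD, map_zero, zero_add, map_smul, ih v hv hD,
        Finset.prod_range_succ, smul_smul]
      congr 1
      push_cast
      ring

lemma prodP_ne (i : ℕ) (h : 2 * i ≤ n) :
    (∏ j ∈ Finset.range (n - 2 * i), (((j : K) + 1) * ((n : K) - 2 * i - j))) ≠ 0 := by
  refine Finset.prod_ne_zero_iff.mpr fun j hj => mul_ne_zero ?_ ?_
  · have hj1 := Nat.cast_add_one_ne_zero (R := K) j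
    push_cast at hj1
    exact hj1
  · have hj' : j < n - 2 * i := Finset.mem_range.mp hj
    have h2 : (n : K) - 2 * i - j = ((n - (2 * i + j) : ℕ) : K) := by
      rw [Nat.cast_sub (by omega)]
      push_cast; ring
    rw [h2]
    exact Nat.cast_ne_zero.mpr (Nat.sub_ne_zero_of_lt (by omega))

end SLPcore
namespace SLPcore

variable {K : Type*} [Field K] [CharZero K] {n : ℕ}

lemma Upow_mem (m : ℕ) {i : ℕ} : ∀ v ∈ Mdeg K n i, (Uop K n ^ m) v ∈ Mdeg K n (i + m) := by
  induction m with
  | zero => intro v hv; simpa using hv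
  | succ m ih =>
      intro v hv
      have e1 : (Uop K n ^ (m + 1)) v = Uop K n ((Uop K n ^ m) v) := by
        rw [pow_succ']; rfl
      rw [e1, ← Nat.add_assoc]
      exact Uop_mem _ (ih v hv)

lemma Upow_inj : ∀ i, 2 * i ≤ n → ∀ v ∈ Mdeg K n i, (Uop K n ^ (n - 2 * i)) v = 0 → v = 0 := by
  intro i
  induction i with
  | zero =>
      intro h v hv hU
      have hp := prim (K := K) (n := n) (i := 0) n v hv (Dop_zero v hv)
      rw [show n - 2 * 0 = n by omega] at hU
      rw [hU, map_zero] at hp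
      have hP := prodP_ne (K := K) (n := n) 0 (by omega)
      rw [show n - 2 * 0 = n by omega] at hP
      exact (smul_eq_zero_iff_right hP).mp hp.symm
  | succ i ih =>
      intro h v hv hU
      rcases Nat.eq_zero_or_eq_succ_pred (n - 2 * (i + 1)) with hm | hm
      · rw [hm, pow_zero] at hU
        simpa using hU
      · set m' := (n - 2 * (i + 1)).pred with hm'
        rw [hm] at hU
        -- commutator relation applied to v
        have hc := comm_pow (K := K) (n := n) (m := m') v hv
        rw [hU, map_zero] at hc
        -- apply U^2 to the relation
        have hc2 := congrArg (fun w => (Uop K n ^ 2) w) hc.symm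
        simp only [map_add, map_smul, map_zero] at hc2
        have e1 : ∀ (a : ℕ) w, (Uop K n ^ 2) ((Uop K n ^ a) w) = (Uop K n ^ (2 + a)) w := by
          intro a w
          rw [pow_add]; rfl
        rw [e1, e1] at hc2
        have hz : (Uop K n ^ (2 + m')) v = 0 := by
          have e2 : (Uop K n ^ (2 + m')) v = (Uop K n) ((Uop K n ^ (m' + 1)) v) := by
            rw [show 2 + m' = (m' + 1) + 1 by omega, pow_succ']; rfl
          rw [e2, hU, map_zero]
        rw [hz, smul_zero, add_zero] at hc2
        -- D v is killed by U^(n - 2i)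
        have hDv : Dop K n v ∈ Mdeg K n i := Dop_mem v hv
        have harith : 2 + (m' + 1) = n - 2 * i := by omega
        have hD0 : Dop K n v = 0 := by
          refine ih (by omega) _ hDv ?_
          rw [← harith]
          exact hc2
        have hp := prim (K := K) (n := n) (i := i + 1) (m' + 1) v hv hD0
        rw [hU, map_zero] at hp
        have hP := prodP_ne (K := K) (n := n) (i + 1) h
        rw [hm] at hP
        exact (smul_eq_zero_iff_right hP).mp hp.symm

end SLPcore
namespace SLPcore

variable {K : Type*} [Field K] [CharZero K] {n : ℕ}

lemma finrank_Mdeg (i : ℕ) :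
    Module.finrank K (Mdeg K n i) = Fintype.card {s : Finset (Fin n) // s.card = i} := by
  classical
  have e := Finsupp.supportedEquivFinsupp (M := K) (R := K) {s : Finset (Fin n) | s.card = i}
  rw [Mdeg, e.finrank_eq, Module.finrank_finsupp_self]
  exact Fintype.card_congr (Equiv.subtypeEquivRight (by simp))

lemma card_subtype_eq (i : ℕ) (h : i ≤ n) :
    Fintype.card {s : Finset (Fin n) // s.card = i}
      = Fintype.card {s : Finset (Fin n) // s.card = n - i} := by
  apply Fintype.card_congr
  refine ⟨fun s => ⟨(s : Finset (Fin n))ᶜ, ?_⟩, fun s => ⟨(s : Finset (Fin n))ᶜ, ?_⟩, ?_, ?_⟩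
  · rw [Finset.card_compl, Fintype.card_fin, s.2]
  · rw [Finset.card_compl, Fintype.card_fin, s.2]; omega
  · intro s; ext1; simp
  · intro s; ext1; simp

lemma Upow_surj (i : ℕ) (h : 2 * i ≤ n) :
    ∀ w ∈ Mdeg K n (n - i), ∃ v ∈ Mdeg K n i, (Uop K n ^ (n - 2 * i)) v = w := by
  classical
  have hmap : ∀ v ∈ Mdeg K n i, (Uop K n ^ (n - 2 * i)) v ∈ Mdeg K n (n - i) := by
    intro v hv
    have h2 := Upow_mem (n - 2 * i) v hv
    rwa [show i + (n - 2 * i) = n - i by omega] at h2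
  let f : Mdeg K n i →ₗ[K] Mdeg K n (n - i) :=
    (Uop K n ^ (n - 2 * i)).restrict hmap
  have hinj : Function.Injective f := by
    intro a b hab
    have h1 : (Uop K n ^ (n - 2 * i)) ((a : Finset (Fin n) →₀ K) - b) = 0 := by
      have h2 := congrArg Subtype.val hab
      simp only [f, LinearMap.restrict_apply] at h2
      rw [map_sub, h2, sub_self]
    have h3 := Upow_inj i h _ (Submodule.sub_mem _ a.2 b.2) h1
    exact Subtype.ext (sub_eq_zero.mp h3)
  have hsurj : Function.Surjective f := by
    have hfr : Module.finrank K (Mdeg K n i) = Module.finrank K (Mdeg K n (n - i)) := by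
      rw [finrank_Mdeg, finrank_Mdeg, card_subtype_eq i (by omega)]
    exact (LinearMap.injective_iff_surjective_of_finrank_eq_finrank (K := K) (V := Mdeg K n i)
      (V₂ := Mdeg K n (n - i)) hfr (f := f)).mp hinj
  intro w hw
  obtain ⟨v, hv⟩ := hsurj ⟨w, hw⟩
  exact ⟨v, v.2, congrArg Subtype.val hv⟩

end SLPcore
namespace SLPcore

open MvPolynomial

variable {K : Type*} [Field K] [CharZero K] {n : ℕ}

variable (K n) in
noncomputable def Isq : Ideal (MvPolynomial (Fin n) K) :=
  Ideal.span (Set.range fun i : Fin n => (X i : MvPolynomial (Fin n) K) ^ 2)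

variable (n) in
noncomputable def expo (s : Finset (Fin n)) : Fin n →₀ ℕ := ∑ j ∈ s, Finsupp.single j 1

lemma expo_apply (s : Finset (Fin n)) (j : Fin n) :
    expo n s j = if j ∈ s then 1 else 0 := by
  classical
  rw [expo, Finset.sum_apply']
  rw [Finset.sum_congr rfl (fun k _ => Finsupp.single_apply (a := k) (a' := j) (b := 1))]
  simp [Finset.sum_ite_eq' s j (fun _ => 1)]

lemma expo_inj : Function.Injective (expo n) := by
  intro s t h
  ext j
  have h1 := expo_apply s j
  rw [h, expo_apply] at h1
  by_cases hj : j ∈ t <;> by_cases hj' : j ∈ s <;> simp_all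

lemma expo_squarefree (s : Finset (Fin n)) (j : Fin n) : expo n s j ≤ 1 := by
  rw [expo_apply]; split <;> omega

lemma degree_expo (s : Finset (Fin n)) : (expo n s).degree = s.card := by
  rw [Finsupp.degree_eq_weight_one, expo, map_sum]
  rw [Finset.sum_congr rfl (fun k _ => by
    rw [Finsupp.weight_apply, Finsupp.sum_single_index] <;> simp)]
  simp

lemma expo_insert {s : Finset (Fin n)} {j : Fin n} (h : j ∉ s) :
    expo n (insert j s) = Finsupp.single j 1 + expo n s := by
  rw [expo, expo, Finset.sum_insert h]

lemma monomial_mem_Isq {d : Fin n →₀ ℕ} {j : Fin n} (h : 2 ≤ d j) (c : K) :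
    monomial d c ∈ Isq K n := by
  have hle : Finsupp.single j 2 ≤ d := Finsupp.single_le_iff.mpr h
  have h1 : monomial d c = (X j : MvPolynomial (Fin n) K) ^ 2
      * monomial (d - Finsupp.single j 2) c := by
    rw [X_pow_eq_monomial, monomial_mul, one_mul, add_tsub_cancel_of_le hle]
  rw [h1]
  exact Ideal.mul_mem_right _ _ (Ideal.subset_span ⟨j, rfl⟩)

lemma coeff_eq_zero_of_mem_Isq {p : MvPolynomial (Fin n) K} (hp : p ∈ Isq K n)
    {d : Fin n →₀ ℕ} (hd : ∀ j, d j ≤ 1) : coeff d p = 0 := by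
  classical
  rw [Isq, Ideal.mem_span_range_iff_exists_fun] at hp
  obtain ⟨c, hc⟩ := hp
  rw [← hc, coeff_sum]
  refine Finset.sum_eq_zero fun j _ => ?_
  rw [X_pow_eq_monomial, coeff_mul_monomial']
  rw [if_neg]
  intro hle
  have := Finsupp.single_le_iff.mp hle
  have := hd j
  omega

end SLPcore
namespace SLPcore

open MvPolynomial

variable {K : Type*} [Field K] [CharZero K] {n : ℕ}

variable (K n) in
noncomputable def phi : (Finset (Fin n) →₀ K) →ₗ[K] (MvPolynomial (Fin n) K ⧸ Isq K n) :=
  Finsupp.linearCombination K fun s =>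
    Ideal.Quotient.mkₐ K (Isq K n) (monomial (expo n s) 1)

lemma phi_single (s : Finset (Fin n)) (c : K) :
    phi K n (Finsupp.single s c)
      = Ideal.Quotient.mkₐ K (Isq K n) (monomial (expo n s) c) := by
  rw [phi, Finsupp.linearCombination_single, ← map_smul, smul_monomial, smul_eq_mul, mul_one]

lemma pi_eq_zero_iff (p : MvPolynomial (Fin n) K) :
    Ideal.Quotient.mkₐ K (Isq K n) p = 0 ↔ p ∈ Isq K n := by
  rw [Ideal.Quotient.mkₐ_eq_mk, Ideal.Quotient.eq_zero_iff_mem]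

lemma phi_eq_pi (v : Finset (Fin n) →₀ K) :
    phi K n v = Ideal.Quotient.mkₐ K (Isq K n)
      (∑ s ∈ v.support, monomial (expo n s) (v s)) := by
  conv_lhs => rw [← Finsupp.sum_single v]
  rw [Finsupp.sum, map_sum, map_sum]
  exact Finset.sum_congr rfl fun s _ => phi_single s (v s)

lemma phi_inj : Function.Injective (phi K n) := by
  classical
  rw [injective_iff_map_eq_zero]
  intro v hv
  rw [phi_eq_pi, pi_eq_zero_iff] at hv
  ext t
  have h1 : coeff (expo n t) (∑ s ∈ v.support, monomial (expo n s) (v s)) = v t := by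
    rw [coeff_sum]
    have h2 : ∀ s ∈ v.support, coeff (expo n t) (monomial (expo n s) (v s))
        = if s = t then v s else 0 := by
      intro s _
      rw [coeff_monomial,
        if_congr ⟨fun h => expo_inj h, fun h => by rw [h]⟩ rfl rfl]
    rw [Finset.sum_congr rfl h2, Finset.sum_ite_eq' v.support t (fun s => v s)]
    split
    · rfl
    · next h => exact (Finsupp.notMem_support_iff.mp h).symm
  have h3 := coeff_eq_zero_of_mem_Isq hv (expo_squarefree t)
  rw [h1] at h3
  simpa using h3

lemma phi_U : (phi K n).comp (Uop K n)
    = (LinearMap.mulLeft K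
        (Ideal.Quotient.mkₐ K (Isq K n) (∑ j, X j))).comp (phi K n) := by
  classical
  apply Finsupp.lhom_ext
  intro s c
  rw [LinearMap.comp_apply, LinearMap.comp_apply, LinearMap.mulLeft_apply]
  rw [Uop_single, map_sum, phi_single, ← map_mul, Finset.sum_mul, map_sum,
    ← Finset.sum_add_sum_compl s]
  have hzero : ∀ j ∈ s,
      Ideal.Quotient.mkₐ K (Isq K n) ((X j : MvPolynomial (Fin n) K)
        * monomial (expo n s) c) = 0 := by
    intro j hj
    rw [pi_eq_zero_iff]
    have hX : (X j : MvPolynomial (Fin n) K) = monomial (Finsupp.single j 1) 1 := by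
      rw [← X_pow_eq_monomial, pow_one]
    rw [hX, monomial_mul, one_mul]
    refine monomial_mem_Isq (j := j) ?_ c
    rw [Finsupp.add_apply, Finsupp.single_apply, if_pos rfl, expo_apply, if_pos hj]
  rw [Finset.sum_congr rfl hzero, Finset.sum_const_zero, zero_add]
  refine (Finset.sum_congr rfl fun j hj => ?_).symm
  have hjs : j ∉ s := by simpa using hj
  have hX : (X j : MvPolynomial (Fin n) K) = monomial (Finsupp.single j 1) 1 := by
    rw [← X_pow_eq_monomial, pow_one]
  rw [hX, monomial_mul, one_mul, ← expo_insert hjs, phi_single]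

end SLPcore
namespace SLPcore

open MvPolynomial

variable {K : Type*} [Field K] [CharZero K] {n : ℕ}

lemma phi_U_apply (v : Finset (Fin n) →₀ K) :
    phi K n (Uop K n v)
      = Ideal.Quotient.mkₐ K (Isq K n) (∑ j, X j) * phi K n v := by
  have h := congrArg (fun f => f v) (phi_U (K := K) (n := n))
  simpa using h

lemma phi_Upow (m : ℕ) (v : Finset (Fin n) →₀ K) :
    phi K n ((Uop K n ^ m) v)
      = (Ideal.Quotient.mkₐ K (Isq K n) (∑ j, X j)) ^ m * phi K n v := by
  induction m with
  | zero => simp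
  | succ m ih =>
      have e1 : (Uop K n ^ (m + 1)) v = Uop K n ((Uop K n ^ m) v) := by
        rw [pow_succ']; rfl
      rw [e1, phi_U_apply, ih, pow_succ]
      ring

lemma Asub_eq (i : ℕ) :
    Submodule.map (Ideal.Quotient.mkₐ K (Isq K n)).toLinearMap
        (homogeneousSubmodule (Fin n) K i)
      = Submodule.map (phi K n) (Mdeg K n i) := by
  classical
  apply le_antisymm
  · rintro x hx
    obtain ⟨p, hp, rfl⟩ := Submodule.mem_map.mp hx
    rw [mem_homogeneousSubmodule] at hp
    have hπ : (Ideal.Quotient.mkₐ K (Isq K n)).toLinearMap p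
        = ∑ d ∈ p.support, Ideal.Quotient.mkₐ K (Isq K n) (monomial d (coeff d p)) := by
      rw [AlgHom.toLinearMap_apply]
      conv_lhs => rw [← support_sum_monomial_coeff p]
      rw [map_sum]
    rw [hπ]
    refine Submodule.sum_mem _ fun d hd => ?_
    have hcd : coeff d p ≠ 0 := MvPolynomial.mem_support_iff.mp hd
    have hdeg : d.degree = i := by
      rw [Finsupp.degree_eq_weight_one]
      exact hp hcd
    by_cases hsq : ∀ j, d j ≤ 1
    · have hde : d = expo n d.support := by
        ext j
        rw [expo_apply]
        have h1 := hsq j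
        by_cases hj : j ∈ d.support
        · have := Finsupp.mem_support_iff.mp hj
          rw [if_pos hj]; omega
        · have := Finsupp.notMem_support_iff.mp hj
          rw [if_neg hj]; omega
      have hcard : d.support.card = i := by
        rw [hde, degree_expo] at hdeg
        exact hdeg
      refine Submodule.mem_map.mpr
        ⟨Finsupp.single d.support (coeff d p), single_mem_Mdeg hcard _, ?_⟩
      rw [phi_single, ← hde]
    · push_neg at hsq
      obtain ⟨j, hj⟩ := hsq
      have h0 : Ideal.Quotient.mkₐ K (Isq K n) (monomial d (coeff d p)) = 0 := by
        rw [pi_eq_zero_iff]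
        exact monomial_mem_Isq (j := j) (by omega) _
      rw [h0]
      exact Submodule.zero_mem _
  · rintro x hx
    obtain ⟨v, hv, rfl⟩ := Submodule.mem_map.mp hx
    rw [phi_eq_pi]
    refine Submodule.mem_map.mpr ⟨_, ?_, rfl⟩
    rw [mem_homogeneousSubmodule]
    refine IsHomogeneous.sum _ _ _ fun s hs => ?_
    exact isHomogeneous_monomial _ (by rw [degree_expo]; exact hv hs)

end SLPcore
open SLPcore

/-- `e₁ = x₁+⋯+xₙ` is a strong Lefschetz element for the quadratic monomial
complete intersection `B = K[x₁,…,xₙ]/(x₁²,…,xₙ²)`: multiplication by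
`e₁^{n-2i} : Bᵢ → B_{n-i}` is bijective for all `i ≤ ⌊n/2⌋`. -/
theorem monomial_quadratic_complete_intersection_SLP
    (K : Type*) [Field K] [CharZero K] (n : ℕ)
    (I : Ideal (MvPolynomial (Fin n) K))
    (hI : I = Ideal.span (Set.range fun i : Fin n => (X i : MvPolynomial (Fin n) K) ^ 2))
    (π : MvPolynomial (Fin n) K →ₐ[K] (MvPolynomial (Fin n) K ⧸ I))
    (hπ : π = Ideal.Quotient.mkₐ K I)
    (𝒜 : ℕ → Submodule K (MvPolynomial (Fin n) K ⧸ I))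
    (h𝒜 : ∀ i, 𝒜 i = Submodule.map π.toLinearMap (homogeneousSubmodule (Fin n) K i)) :
    ∀ i ≤ n / 2,
      Set.BijOn (fun b => π (∑ j, X j) ^ (n - 2 * i) * b) (𝒜 i) (𝒜 (n - i)) := by
  subst hπ
  have hI' : I = Isq K n := hI
  subst hI'
  intro i hi
  have h2 : 2 * i ≤ n := by omega
  have hA : ∀ j, ((𝒜 j : Set (MvPolynomial (Fin n) K ⧸ Isq K n)))
      = (phi K n) '' (Mdeg K n j : Set (Finset (Fin n) →₀ K)) := by
    intro j
    rw [h𝒜 j, Asub_eq j, Submodule.map_coe]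
  have hmem : ∀ v ∈ Mdeg K n i, (Uop K n ^ (n - 2 * i)) v ∈ Mdeg K n (n - i) := by
    intro v hv
    have h3 := Upow_mem (n - 2 * i) v hv
    rwa [show i + (n - 2 * i) = n - i by omega] at h3
  refine ⟨?_, ?_, ?_⟩
  · intro b hb
    rw [hA i] at hb
    obtain ⟨v, hv, rfl⟩ := hb
    rw [hA (n - i)]
    refine ⟨(Uop K n ^ (n - 2 * i)) v, hmem v hv, ?_⟩
    rw [phi_Upow]
  · intro b1 hb1 b2 hb2 heq
    rw [hA i] at hb1 hb2
    obtain ⟨v1, hv1, rfl⟩ := hb1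
    obtain ⟨v2, hv2, rfl⟩ := hb2
    simp only at heq
    rw [← phi_Upow, ← phi_Upow] at heq
    have h4 := phi_inj heq
    have h5 : (Uop K n ^ (n - 2 * i)) (v1 - v2) = 0 := by
      rw [map_sub, h4, sub_self]
    have h6 := Upow_inj i h2 _ (Submodule.sub_mem _ hv1 hv2) h5
    rw [sub_eq_zero] at h6
    rw [h6]
  · intro b hb
    rw [hA (n - i)] at hb
    obtain ⟨w, hw, rfl⟩ := hb
    obtain ⟨v, hv, hvw⟩ := Upow_surj i h2 w hw
    refine ⟨phi K n v, ?_, ?_⟩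
    · rw [hA i]
      exact ⟨v, hv, rfl⟩
    · show _ * _ = _
      rw [← phi_Upow, hvw]
end

section
/- Let K have characteristic zero, n = n₁ + ⋯ + n_r, and let the Young subgroup G = S_{n₁} × ⋯ × S_{n_r} act on B = K[x₁,…,xₙ]/(x₁²,…,xₙ²) by block-wise permutation of the variables. Then the invariant ring B^G is isomorphic as a graded K-algebra to K[y₁,…,y_r]/(y₁^{n₁+1},…,y_r^{n_r+1}), where yᵢ has degree one and maps to the sum of the variables in the i-th block. -/
open MvPolynomial

open Finset

section AuxYoung

private lemma sum_insert_compl {α M : Type*} [DecidableEq α] [Fintype α] [AddCommMonoid M]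
    (k : ℕ) (f : Finset α → M) :
    ∑ S ∈ powersetCard k (univ : Finset α), ∑ j ∈ Sᶜ, f (insert j S)
      = (k + 1) • ∑ T ∈ powersetCard (k + 1) (univ : Finset α), f T := by
  rw [Finset.smul_sum]
  have hR : ∀ T ∈ powersetCard (k + 1) (univ : Finset α),
      (k + 1) • f T = ∑ _j ∈ T, f T := by
    intro T hT
    rw [Finset.sum_const, Finset.mem_powersetCard_univ.mp hT]
  rw [Finset.sum_congr rfl hR,
    Finset.sum_sigma' (powersetCard k (univ : Finset α)) (fun S => Sᶜ)
      (fun S j => f (insert j S)),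
    Finset.sum_sigma' (powersetCard (k + 1) (univ : Finset α)) (fun T => T) (fun T _ => f T)]
  refine Finset.sum_nbij' (fun p => ⟨insert p.2 p.1, p.2⟩) (fun p => ⟨p.1.erase p.2, p.2⟩)
    ?_ ?_ ?_ ?_ ?_
  · rintro ⟨S, j⟩ hp
    simp only [Finset.mem_sigma, Finset.mem_powersetCard_univ, Finset.mem_compl] at hp ⊢
    exact ⟨by rw [Finset.card_insert_of_notMem hp.2, hp.1], Finset.mem_insert_self _ _⟩
  · rintro ⟨T, j⟩ hp
    simp only [Finset.mem_sigma, Finset.mem_powersetCard_univ, Finset.mem_compl] at hp ⊢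
    refine ⟨by rw [Finset.card_erase_of_mem hp.2, hp.1]; rfl, Finset.notMem_erase _ _⟩
  · rintro ⟨S, j⟩ hp
    simp only [Finset.mem_sigma, Finset.mem_powersetCard_univ, Finset.mem_compl] at hp
    simp [Finset.erase_insert hp.2]
  · rintro ⟨T, j⟩ hp
    simp only [Finset.mem_sigma, Finset.mem_powersetCard_univ, Finset.mem_compl] at hp
    simp [Finset.insert_erase hp.2]
  · rintro ⟨S, j⟩ _
    rfl

private lemma pow_sum_of_sq_zero {A : Type*} [CommRing A] {ι : Type*} [Fintype ι] [DecidableEq ι]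
    (x : ι → A) (hx : ∀ j, x j ^ 2 = 0) (k : ℕ) :
    (∑ j, x j) ^ k
      = k.factorial • ∑ S ∈ powersetCard k (univ : Finset ι), ∏ j ∈ S, x j := by
  induction k with
  | zero => simp
  | succ k ih =>
    rw [pow_succ, ih, smul_mul_assoc, Finset.sum_mul]
    have h1 : ∀ S ∈ powersetCard k (univ : Finset ι),
        (∏ j ∈ S, x j) * (∑ j, x j) = ∑ j ∈ Sᶜ, ∏ j' ∈ insert j S, x j' := by
      intro S _
      rw [Finset.mul_sum, ← Finset.sum_add_sum_compl S fun j => (∏ j' ∈ S, x j') * x j]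
      have hz : ∀ j ∈ S, (∏ j' ∈ S, x j') * x j = 0 := by
        intro j hj
        rw [← Finset.prod_erase_mul S x hj, mul_assoc, ← sq, hx, mul_zero]
      rw [Finset.sum_eq_zero hz, zero_add]
      refine Finset.sum_congr rfl fun j hj => ?_
      rw [Finset.prod_insert (Finset.mem_compl.mp hj), mul_comm]
    rw [Finset.sum_congr rfl h1, sum_insert_compl k (fun T => ∏ j' ∈ T, x j'), smul_smul,
      Nat.factorial_succ, mul_comm]

private lemma mem_span_X_pow_iff {σ : Type*} {K : Type*} [CommRing K] (m : σ → ℕ)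
    (p : MvPolynomial σ K) :
    p ∈ Ideal.span (Set.range fun j : σ => (X j : MvPolynomial σ K) ^ m j)
      ↔ ∀ d : σ →₀ ℕ, (∀ j, d j < m j) → coeff d p = 0 := by
  classical
  constructor
  · intro hp
    let S : Ideal (MvPolynomial σ K) :=
      { carrier := {q | ∀ d : σ →₀ ℕ, (∀ j, d j < m j) → coeff d q = 0}
        add_mem' := fun ha hb d hd => by
          simp only [Set.mem_setOf_eq] at *
          rw [coeff_add, ha d hd, hb d hd, add_zero]
        zero_mem' := fun d _ => by simp
        smul_mem' := by
          intro c q hq d hd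
          simp only [Set.mem_setOf_eq] at hq ⊢
          rw [smul_eq_mul, coeff_mul]
          refine Finset.sum_eq_zero fun x hx => ?_
          have hx2 : x.2 ≤ d := by
            rw [Finset.HasAntidiagonal.mem_antidiagonal] at hx
            exact hx ▸ le_add_self
          rw [hq x.2 (fun j => lt_of_le_of_lt (hx2 j) (hd j)), mul_zero] }
    have hle : Ideal.span (Set.range fun j : σ => (X j : MvPolynomial σ K) ^ m j) ≤ S := by
      rw [Ideal.span_le]
      rintro _ ⟨j, rfl⟩ d hd
      rw [coeff_X_pow, if_neg]
      intro h
      have := hd j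
      rw [← h, Finsupp.single_eq_same] at this
      exact lt_irrefl _ this
    exact hle hp
  · intro h
    rw [← support_sum_monomial_coeff p]
    refine Ideal.sum_mem _ fun v hv => ?_
    have hv' : ¬ ∀ j, v j < m j := fun hall => (mem_support_iff.mp hv) (h v hall)
    push_neg at hv'
    obtain ⟨j, hj⟩ := hv'
    have heq : monomial v (coeff v p)
        = (X j ^ m j) * monomial (v - Finsupp.single j (m j)) (coeff v p) := by
      rw [X_pow_eq_monomial, monomial_mul, one_mul,
        add_tsub_cancel_of_le (Finsupp.single_le_iff.mpr hj)]
    rw [heq]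
    exact Ideal.mul_mem_right _ _ (Ideal.subset_span ⟨j, rfl⟩)

private lemma exists_perm_image {α : Type*} [Fintype α] [DecidableEq α] {s t : Finset α}
    (h : s.card = t.card) : ∃ π : Equiv.Perm α, s.image π = t := by
  have h' : sᶜ.card = tᶜ.card := by simp [Finset.card_compl, h]
  let e₁ : {x // x ∈ s} ≃ {x // x ∈ t} := Finset.equivOfCardEq h
  let e₂ : {x // ¬ x ∈ s} ≃ {x // ¬ x ∈ t} :=
    ((Equiv.subtypeEquivRight (fun x => (Finset.mem_compl (s := s)).symm)).trans
      (Finset.equivOfCardEq h')).trans (Equiv.subtypeEquivRight fun x => Finset.mem_compl)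
  refine ⟨(Equiv.sumCompl (· ∈ s)).symm.trans ((e₁.sumCongr e₂).trans (Equiv.sumCompl (· ∈ t))), ?_⟩
  apply Finset.eq_of_subset_of_card_le
  · intro y hy
    obtain ⟨x, hx, rfl⟩ := Finset.mem_image.mp hy
    simp only [Equiv.trans_apply]
    rw [Equiv.sumCompl_symm_apply_of_pos hx]
    exact (e₁ ⟨x, hx⟩).2
  · rw [Finset.card_image_of_injective _ (Equiv.injective _), h]

section Young

variable {K : Type*} [Field K] {r : ℕ} {nb : Fin r → ℕ}

/-- the squarefree monomial associated to a choice of subsets, one per block -/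
noncomputable def bB (I : Ideal (MvPolynomial (Σ i : Fin r, Fin (nb i)) K))
    (t : ∀ i : Fin r, Finset (Fin (nb i))) :
    MvPolynomial (Σ i : Fin r, Fin (nb i)) K ⧸ I :=
  Ideal.Quotient.mkₐ K I (∏ p ∈ Finset.univ.sigma t, X p)

/-- the exponent finsupp of the squarefree monomial -/
noncomputable def dD (t : ∀ i : Fin r, Finset (Fin (nb i))) :
    (Σ i : Fin r, Fin (nb i)) →₀ ℕ :=
  ∑ p ∈ Finset.univ.sigma t, Finsupp.single p 1

lemma dD_apply (t : ∀ i : Fin r, Finset (Fin (nb i))) (q : Σ i : Fin r, Fin (nb i)) :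
    dD t q = if q.2 ∈ t q.1 then 1 else 0 := by
  classical
  rw [dD, Finsupp.finset_sum_apply]
  have : ∀ p ∈ Finset.univ.sigma t, (Finsupp.single p 1) q = if p = q then 1 else 0 := by
    intro p _
    rw [Finsupp.single_apply]
  rw [Finset.sum_congr rfl this, Finset.sum_ite_eq' (Finset.univ.sigma t) q (fun _ => 1)]
  congr 1
  simp [Finset.mem_sigma]

lemma dD_injective :
    Function.Injective (dD : (∀ i : Fin r, Finset (Fin (nb i))) → _) := by
  classical
  intro t t' h
  funext i
  ext j
  have := DFunLike.congr_fun h ⟨i, j⟩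
  rw [dD_apply, dD_apply] at this
  by_cases h1 : j ∈ t i <;> by_cases h2 : j ∈ t' i <;>
    simp [h1, h2] at this ⊢

lemma prod_X_eq_monomial_sum {σ : Type*} (T : Finset σ) :
    (∏ p ∈ T, (X p : MvPolynomial σ K))
      = monomial (∑ p ∈ T, Finsupp.single p 1) 1 := by
  classical
  induction T using Finset.cons_induction with
  | empty => simp
  | cons a s ha ih =>
    rw [Finset.prod_cons, Finset.sum_cons, ih, X, monomial_mul, one_mul]

lemma E_eq_monomial (t : ∀ i : Fin r, Finset (Fin (nb i))) :
    (∏ p ∈ Finset.univ.sigma t, (X p : MvPolynomial (Σ i : Fin r, Fin (nb i)) K))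
      = monomial (dD t) 1 :=
  prod_X_eq_monomial_sum _

/-- linear independence of the squarefree monomial basis in the quotient -/
lemma bB_li (I : Ideal (MvPolynomial (Σ i : Fin r, Fin (nb i)) K))
    (hI : I = Ideal.span (Set.range fun j : Σ i : Fin r, Fin (nb i) =>
      (X j : MvPolynomial (Σ i : Fin r, Fin (nb i)) K) ^ 2))
    (g : (∀ i : Fin r, Finset (Fin (nb i))) → K)
    (hg : ∑ t, g t • bB I t = 0) :
    ∀ t, g t = 0 := by
  classical
  intro t₀
  have hq : (∑ t, g t • ∏ p ∈ Finset.univ.sigma t, (X p : MvPolynomial _ K)) ∈ I := by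
    rw [← Ideal.Quotient.eq_zero_iff_mem, ← Ideal.Quotient.mkₐ_eq_mk K, map_sum]
    simp only [map_smul]
    exact hg
  rw [hI] at hq
  have h2 : ∀ j, dD t₀ j < 2 := by
    intro j
    rw [dD_apply]
    split <;> omega
  have := (mem_span_X_pow_iff (fun _ => 2) _).mp hq (dD t₀) h2
  rw [coeff_sum] at this
  simp only [coeff_smul, E_eq_monomial, coeff_monomial, dD_injective.eq_iff, smul_eq_mul,
    mul_ite, mul_one, mul_zero] at this
  rwa [Finset.sum_ite_eq' Finset.univ t₀ g, if_pos (Finset.mem_univ _)] at this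

/-- spanning -/
lemma bB_span (I : Ideal (MvPolynomial (Σ i : Fin r, Fin (nb i)) K))
    (hI : I = Ideal.span (Set.range fun j : Σ i : Fin r, Fin (nb i) =>
      (X j : MvPolynomial (Σ i : Fin r, Fin (nb i)) K) ^ 2))
    (b : MvPolynomial (Σ i : Fin r, Fin (nb i)) K ⧸ I) :
    ∃ c : (∀ i : Fin r, Finset (Fin (nb i))) → K, ∑ t, c t • bB I t = b := by
  classical
  rw [← Submodule.mem_span_range_iff_exists_fun]
  obtain ⟨p, rfl⟩ := Ideal.Quotient.mkₐ_surjective K I b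
  rw [← support_sum_monomial_coeff p, map_sum]
  refine Submodule.sum_mem _ fun v hv => ?_
  by_cases hsq : ∀ p, v p ≤ 1
  · set t : ∀ i : Fin r, Finset (Fin (nb i)) :=
      fun i => Finset.univ.filter (fun j => v ⟨i, j⟩ = 1) with ht
    have hdd : dD t = v := by
      ext q
      obtain ⟨i, j⟩ := q
      rw [dD_apply]
      have := hsq ⟨i, j⟩
      rcases Nat.le_one_iff_eq_zero_or_eq_one.mp this with h | h <;>
        simp [ht, h]
    have : monomial v (coeff v p) = coeff v p • ∏ p ∈ Finset.univ.sigma t, X p := by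
      rw [E_eq_monomial, hdd, smul_monomial, smul_eq_mul, mul_one]
    rw [this, map_smul]
    exact Submodule.smul_mem _ _ (Submodule.subset_span ⟨t, rfl⟩)
  · have : monomial v (coeff v p) ∈ I := by
      rw [hI]
      rw [mem_span_X_pow_iff (fun _ => 2)]
      intro d hd
      rw [coeff_monomial, if_neg]
      intro h
      push_neg at hsq
      obtain ⟨q, hq⟩ := hsq
      rw [← h] at hd
      have := hd q
      omega
    have hz : Ideal.Quotient.mkₐ K I (monomial v (coeff v p)) = 0 := by
      rw [Ideal.Quotient.mkₐ_eq_mk]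
      exact Ideal.Quotient.eq_zero_iff_mem.mpr this
    rw [hz]
    exact Submodule.zero_mem _

/-- the "orbit sum" of squarefree monomials of block type `k` -/
noncomputable def Ok (I : Ideal (MvPolynomial (Σ i : Fin r, Fin (nb i)) K))
    (k : Fin r → ℕ) : MvPolynomial (Σ i : Fin r, Fin (nb i)) K ⧸ I :=
  ∑ t ∈ Fintype.piFinset (fun i => Finset.powersetCard (k i) Finset.univ), bB I t

lemma pow_block (I : Ideal (MvPolynomial (Σ i : Fin r, Fin (nb i)) K))
    (hI : I = Ideal.span (Set.range fun j : Σ i : Fin r, Fin (nb i) =>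
      (X j : MvPolynomial (Σ i : Fin r, Fin (nb i)) K) ^ 2))
    (i : Fin r) (k : ℕ) :
    (Ideal.Quotient.mkₐ K I (∑ j : Fin (nb i), X ⟨i, j⟩)) ^ k
      = k.factorial • ∑ S ∈ powersetCard k (univ : Finset (Fin (nb i))),
          Ideal.Quotient.mkₐ K I (∏ j ∈ S, X ⟨i, j⟩) := by
  classical
  rw [map_sum]
  rw [pow_sum_of_sq_zero (fun j : Fin (nb i) => Ideal.Quotient.mkₐ K I (X ⟨i, j⟩))]
  · congr 1
    exact Finset.sum_congr rfl fun S _ => (map_prod _ _ _).symm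
  · intro j
    rw [← map_pow, Ideal.Quotient.mkₐ_eq_mk]
    refine Ideal.Quotient.eq_zero_iff_mem.mpr ?_
    rw [hI]
    exact Ideal.subset_span ⟨⟨i, j⟩, rfl⟩

lemma prod_pow_block (I : Ideal (MvPolynomial (Σ i : Fin r, Fin (nb i)) K))
    (hI : I = Ideal.span (Set.range fun j : Σ i : Fin r, Fin (nb i) =>
      (X j : MvPolynomial (Σ i : Fin r, Fin (nb i)) K) ^ 2))
    (k : Fin r → ℕ) :
    ∏ i, (Ideal.Quotient.mkₐ K I (∑ j : Fin (nb i), X ⟨i, j⟩)) ^ (k i)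
      = (∏ i, (k i).factorial) • Ok I k := by
  classical
  have h1 : ∀ i, (Ideal.Quotient.mkₐ K I (∑ j : Fin (nb i), X ⟨i, j⟩)) ^ (k i)
      = ((k i).factorial : MvPolynomial (Σ i : Fin r, Fin (nb i)) K ⧸ I)
        * ∑ S ∈ powersetCard (k i) (univ : Finset (Fin (nb i))),
            Ideal.Quotient.mkₐ K I (∏ j ∈ S, X ⟨i, j⟩) := by
    intro i
    rw [pow_block I hI i (k i), nsmul_eq_mul]
  rw [Finset.prod_congr rfl fun i _ => h1 i, Finset.prod_mul_distrib, ← Nat.cast_prod,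
    ← nsmul_eq_mul, Finset.prod_univ_sum]
  congr 1
  refine Finset.sum_congr rfl fun t _ => ?_
  rw [bB, ← map_prod, Finset.prod_sigma]

end Young

end AuxYoung


set_option maxHeartbeats 1000000 in
/-- Remark 5.3: the invariant ring of `B = K[x₁,…,xₙ]/(x₁²,…,xₙ²)` under the
Young subgroup `G = S_{n₁} × ⋯ × S_{n_r}` (block-wise permutation of the
variables, the variables being indexed by the sigma type `Σ i, Fin (nb i)`) is
isomorphic, as a graded `K`-algebra, to the monomial complete intersection
`K[y₁,…,y_r]/(y₁^{n₁+1},…,y_r^{n_r+1})`, where `yᵢ` (of degree one) maps to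
the sum of the variables in the `i`-th block. -/
theorem invariants_of_quadratic_monomial_ci_by_young_subgroup
    (K : Type*) [Field K] [CharZero K] (r : ℕ) (nb : Fin r → ℕ)
    (hnb : ∀ i, 0 < nb i)
    (I : Ideal (MvPolynomial (Σ i : Fin r, Fin (nb i)) K))
    (hI : I = Ideal.span (Set.range fun j : Σ i : Fin r, Fin (nb i) =>
      (X j : MvPolynomial (Σ i : Fin r, Fin (nb i)) K) ^ 2))
    (J : Ideal (MvPolynomial (Fin r) K))
    (hJ : J = Ideal.span (Set.range fun i : Fin r =>
      (X i : MvPolynomial (Fin r) K) ^ (nb i + 1)))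
    -- the induced action of the Young subgroup on `B = R/I`
    (act : (∀ i, Equiv.Perm (Fin (nb i))) →
      (MvPolynomial (Σ i : Fin r, Fin (nb i)) K ⧸ I) →ₐ[K]
      (MvPolynomial (Σ i : Fin r, Fin (nb i)) K ⧸ I))
    (hact : ∀ τ p, act τ (Ideal.Quotient.mkₐ K I p)
      = Ideal.Quotient.mkₐ K I (rename (Equiv.sigmaCongrRight τ) p)) :
    ∃ φ : (MvPolynomial (Fin r) K ⧸ J) →ₐ[K]
        (MvPolynomial (Σ i : Fin r, Fin (nb i)) K ⧸ I),
      Function.Injective φ ∧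
      -- the image of `φ` is exactly the ring of invariants `B^G`
      Set.range φ = {b | ∀ τ, act τ b = b} ∧
      -- `yᵢ` maps to the sum of the variables in the `i`-th block
      (∀ i : Fin r, φ (Ideal.Quotient.mkₐ K J (X i))
        = Ideal.Quotient.mkₐ K I (∑ j : Fin (nb i), X ⟨i, j⟩)) := by
  classical
  set sb : Fin r → (MvPolynomial (Σ i : Fin r, Fin (nb i)) K ⧸ I) :=
    fun i => Ideal.Quotient.mkₐ K I (∑ j : Fin (nb i), X ⟨i, j⟩) with hsb
  -- the algebra map kills J
  have hker : ∀ p ∈ J, (aeval sb : MvPolynomial (Fin r) K →ₐ[K] _) p = 0 := by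
    intro p hp
    rw [hJ] at hp
    have hle : Ideal.span (Set.range fun i : Fin r =>
        (X i : MvPolynomial (Fin r) K) ^ (nb i + 1))
        ≤ RingHom.ker (aeval sb : MvPolynomial (Fin r) K →ₐ[K] _).toRingHom := by
      rw [Ideal.span_le]
      rintro _ ⟨i, rfl⟩
      have hz : (aeval sb) ((X i : MvPolynomial (Fin r) K) ^ (nb i + 1)) = 0 := by
        rw [map_pow, aeval_X, hsb]
        rw [pow_block I hI i (nb i + 1)]
        rw [Finset.powersetCard_eq_empty.mpr (by simp)]
        simp
      simp only [SetLike.mem_coe]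
      exact RingHom.mem_ker.mpr hz
    exact hle hp
  have hφmk : ∀ p, Ideal.Quotient.liftₐ J (aeval sb) hker (Ideal.Quotient.mkₐ K J p)
      = aeval sb p := fun p =>
    AlgHom.congr_fun (Ideal.Quotient.liftₐ_comp J (aeval sb) hker) p
  -- key expansion of `aeval sb`
  have hkey : ∀ q : MvPolynomial (Fin r) K, (aeval sb) q
      = ∑ v ∈ q.support, coeff v q • ((∏ i, (v i).factorial) • Ok I ⇑v) := by
    intro q
    conv_lhs => rw [← support_sum_monomial_coeff q]
    rw [map_sum]
    refine Finset.sum_congr rfl fun v _ => ?_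
    rw [aeval_monomial, Finsupp.prod_pow, hsb, prod_pow_block I hI ⇑v, ← Algebra.smul_def]
  refine ⟨Ideal.Quotient.liftₐ J (aeval sb) hker, ?_, ?_, ?_⟩
  · -- injectivity
    rw [injective_iff_map_eq_zero]
    intro a ha
    obtain ⟨q, rfl⟩ := Ideal.Quotient.mkₐ_surjective K J a
    rw [hφmk] at ha
    have hqJ : q ∈ J := by
      rw [hJ]
      refine (mem_span_X_pow_iff (fun i => nb i + 1) q).mpr ?_
      intro v hv
      by_cases hvs : v ∈ q.support
      swap
      · exact notMem_support_iff.mp hvs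
      have hadm : ∀ i, v i ≤ nb i := fun i => Nat.lt_succ_iff.mp (hv i)
      set g : (∀ i : Fin r, Finset (Fin (nb i))) → K := fun t =>
        ∑ w ∈ q.support, if (∀ i, (t i).card = w i)
          then coeff w q * ((∏ i, (w i).factorial : ℕ) : K) else 0 with hg
      have hfil : ∀ w : Fin r →₀ ℕ,
          (Finset.univ.filter (fun t : ∀ i : Fin r, Finset (Fin (nb i)) =>
            ∀ i, (t i).card = w i))
          = Fintype.piFinset (fun i => Finset.powersetCard (w i) Finset.univ) := by
        intro w
        ext t
        simp [Fintype.mem_piFinset, Finset.mem_powersetCard_univ]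
      have hsum : ∑ t, g t • bB I t = 0 := by
        rw [hg]
        simp only [Finset.sum_smul]
        rw [Finset.sum_comm]
        have h1 : ∀ w ∈ q.support,
            (∑ t, (if (∀ i, (t i).card = w i)
              then coeff w q * ((∏ i, (w i).factorial : ℕ) : K) else 0) • bB I t)
            = coeff w q • ((∏ i, (w i).factorial) • Ok I ⇑w) := by
          intro w _
          simp only [ite_smul, zero_smul]
          rw [← Finset.sum_filter, hfil w, Ok, ← Finset.smul_sum, mul_smul,
            Nat.cast_smul_eq_nsmul]
        rw [Finset.sum_congr rfl h1, ← hkey q, ha]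
      have hli := bB_li I hI g hsum
      have hex : ∀ i, ∃ S : Finset (Fin (nb i)), S ⊆ Finset.univ ∧ S.card = v i :=
        fun i => Finset.exists_subset_card_eq (by simpa using hadm i)
      choose t₀ _ hcard using hex
      have hg0 : ∑ w ∈ q.support, (if (∀ i, (t₀ i).card = w i)
          then coeff w q * ((∏ i, (w i).factorial : ℕ) : K) else 0) = 0 := hli t₀
      rw [Finset.sum_eq_single_of_mem v hvs] at hg0
      · rw [if_pos (fun i => hcard i)] at hg0
        have hN : ((∏ i, (v i).factorial : ℕ) : K) ≠ 0 := by
          rw [Nat.cast_ne_zero]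
          exact Finset.prod_ne_zero_iff.mpr fun i _ => (Nat.factorial_pos _).ne'
        exact (mul_eq_zero.mp hg0).resolve_right hN
      · intro w _ hw
        rw [if_neg]
        intro hcond
        apply hw
        ext i
        rw [← hcond i, hcard i]
    rw [Ideal.Quotient.mkₐ_eq_mk]
    exact Ideal.Quotient.eq_zero_iff_mem.mpr hqJ
  · -- range = invariants
    have hsb_inv : ∀ τ i, act τ (sb i) = sb i := by
      intro τ i
      rw [hsb]
      simp only []
      rw [hact]
      congr 1
      rw [map_sum]
      simp only [rename_X]
      exact Fintype.sum_equiv (τ i) _ _ fun j => rfl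
    have hβ : ∀ τ t, act τ (bB I t) = bB I (fun i => (t i).image (τ i)) := by
      intro τ t
      rw [bB, hact, bB]
      congr 1
      rw [map_prod]
      simp only [rename_X]
      rw [Finset.prod_sigma, Finset.prod_sigma]
      refine Finset.prod_congr rfl fun i _ => ?_
      rw [Finset.prod_image (fun a _ b _ h => (τ i).injective h)]
      rfl
    ext b
    constructor
    · rintro ⟨a, rfl⟩
      obtain ⟨q, rfl⟩ := Ideal.Quotient.mkₐ_surjective K J a
      intro τ
      rw [hφmk]
      have hcomp : act τ ((aeval sb) q) = (aeval fun i => act τ (sb i)) q :=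
        AlgHom.congr_fun (comp_aeval (f := sb) (act τ)) q
      rw [hcomp, show (fun i => act τ (sb i)) = sb from funext (hsb_inv τ)]
    · intro hb
      obtain ⟨c, hc⟩ := bB_span I hI b
      -- coefficients are constant on orbits
      have hstep : ∀ (τ : ∀ i, Equiv.Perm (Fin (nb i))) t,
          c (fun i => (t i).image (τ i)) = c t := by
        intro τ t
        set e : (∀ i : Fin r, Finset (Fin (nb i))) ≃ (∀ i : Fin r, Finset (Fin (nb i))) :=
          Equiv.piCongrRight (fun i => (τ i).finsetCongr) with he
        have heapp : ∀ u (i : Fin r), e u i = (u i).image (τ i) := by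
          intro u i
          rw [he]
          simp [Equiv.finsetCongr_apply, Finset.map_eq_image]
        have h2 : ∀ t, act τ (bB I t) = bB I (e t) := by
          intro t
          rw [hβ τ t]
          congr 1
          funext i
          rw [heapp]
        have h1 : ∑ u, c (e.symm u) • bB I u = b := by
          calc ∑ u, c (e.symm u) • bB I u
              = ∑ t, c (e.symm (e t)) • bB I (e t) :=
                (Equiv.sum_comp e (fun u => c (e.symm u) • bB I u)).symm
            _ = ∑ t, c t • act τ (bB I t) :=
                Finset.sum_congr rfl fun t _ => by rw [Equiv.symm_apply_apply, h2]
            _ = act τ (∑ t, c t • bB I t) := by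
                rw [map_sum]
                exact Finset.sum_congr rfl fun t _ => (map_smul _ _ _).symm
            _ = act τ b := by rw [hc]
            _ = b := hb τ
        have hzero : ∑ u, (c (e.symm u) - c u) • bB I u = 0 := by
          simp only [sub_smul]
          rw [Finset.sum_sub_distrib, h1, hc, sub_self]
        have hcoe := bB_li I hI _ hzero
        have := hcoe (e t)
        rw [Equiv.symm_apply_apply, sub_eq_zero] at this
        have hgoal : (fun i => (t i).image (τ i)) = e t := funext fun i => (heapp t i).symm
        rw [hgoal]
        exact this.symm
      -- reconstruct a preimage
      set N : (Fin r → ℕ) → ℕ := fun k => ∏ i, (k i).factorial with hN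
      set Ks : Finset (Fin r → ℕ) := Finset.univ.image
        (fun t : ∀ i : Fin r, Finset (Fin (nb i)) => fun i => (t i).card) with hKs
      set q : MvPolynomial (Fin r) K := ∑ k ∈ Ks,
        (if h : ∃ t : ∀ i : Fin r, Finset (Fin (nb i)), (fun i => (t i).card) = k
          then c h.choose * ((N k : K))⁻¹ else 0)
          • monomial (Finsupp.equivFunOnFinite.symm k) (1 : K) with hq
      refine ⟨Ideal.Quotient.mkₐ K J q, ?_⟩
      rw [hφmk, hq, map_sum]
      have hterm : ∀ k ∈ Ks,
          (aeval sb) ((if h : ∃ t : ∀ i : Fin r, Finset (Fin (nb i)),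
              (fun i => (t i).card) = k then c h.choose * ((N k : K))⁻¹ else 0)
            • monomial (Finsupp.equivFunOnFinite.symm k) (1 : K))
          = ∑ t ∈ Fintype.piFinset (fun i => Finset.powersetCard (k i) Finset.univ),
              c t • bB I t := by
        intro k hk
        obtain ⟨t₁, _, ht₁⟩ := Finset.mem_image.mp hk
        have hex : ∃ t : ∀ i : Fin r, Finset (Fin (nb i)), (fun i => (t i).card) = k :=
          ⟨t₁, ht₁⟩
        rw [dif_pos hex, map_smul, aeval_monomial, map_one, one_mul, Finsupp.prod_pow]
        simp only [Finsupp.equivFunOnFinite_symm_apply_apply]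
        rw [hsb, prod_pow_block I hI k, ← Nat.cast_smul_eq_nsmul K, smul_smul]
        have hne : ((N k : ℕ) : K) ≠ 0 := by
          rw [hN, Nat.cast_ne_zero]
          exact Finset.prod_ne_zero_iff.mpr fun i _ => (Nat.factorial_pos _).ne'
        have hNk : ((∏ i, (k i).factorial : ℕ) : K) = ((N k : ℕ) : K) := by rw [hN]
        rw [hNk, mul_assoc, inv_mul_cancel₀ hne, mul_one, Ok, Finset.smul_sum]
        refine Finset.sum_congr rfl fun t ht => ?_
        congr 1
        have htyt : ∀ i, (t i).card = k i := by
          rw [Fintype.mem_piFinset] at ht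
          exact fun i => Finset.mem_powersetCard_univ.mp (ht i)
        have htyc : ∀ i, (hex.choose i).card = k i := fun i => congrFun hex.choose_spec i
        have hperm : ∀ i, ∃ π : Equiv.Perm (Fin (nb i)),
            (hex.choose i).image π = t i :=
          fun i => exists_perm_image (by rw [htyc i, htyt i])
        choose π hπ using hperm
        calc c hex.choose = c (fun i => (hex.choose i).image (π i)) :=
              (hstep π hex.choose).symm
          _ = c t := by rw [funext hπ]
      have hfib : ∀ k ∈ Ks,
          ∑ t ∈ Fintype.piFinset (fun i => Finset.powersetCard (k i) Finset.univ),
            c t • bB I t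
          = ∑ t ∈ Finset.univ.filter
              (fun t : ∀ i : Fin r, Finset (Fin (nb i)) => (fun i => (t i).card) = k),
              c t • bB I t := by
        intro k _
        congr 1
        ext t
        simp [Fintype.mem_piFinset, Finset.mem_powersetCard_univ, _root_.funext_iff]
      rw [Finset.sum_congr rfl hterm, Finset.sum_congr rfl hfib,
        Finset.sum_fiberwise_of_maps_to
          (fun t _ => Finset.mem_image_of_mem _ (Finset.mem_univ t)) (fun t => c t • bB I t),
        hc]
  · intro i
    rw [hφmk, aeval_X]
end

section
/- Let K have characteristic zero and d, n positive integers. The ideal (x₁^d, x₂^d, …, xₙ^d) ∩ K[x₁,…,xₙ]^{Sₙ} of the ring of symmetric polynomials is generated by the power sum symmetric polynomials p_d, p_{d+1}, …, p_{d+n−1}, where p_k = x₁^k + ⋯ + xₙ^k. -/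
open MvPolynomial

section Aux
open Finset

variable {K : Type*} [CommRing K] {n : ℕ}

/-- Vieta relation: `∑_{j=0}^{n} e_j (-x_{i₀})^{n-j} = 0`. -/
lemma aux_esymm_rel (i₀ : Fin n) :
    ∑ j ∈ Finset.range (n + 1),
      esymm (Fin n) K j * (-(X i₀ : MvPolynomial (Fin n) K)) ^ (n - j) = 0 := by
  have h := Multiset.prod_X_add_C_eq_sum_esymm
    ((univ.val.map (X : Fin n → MvPolynomial (Fin n) K)))
  have hcard : Multiset.card (univ.val.map (X : Fin n → MvPolynomial (Fin n) K)) = n := by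
    simp
  rw [hcard] at h
  have h2 := congrArg (Polynomial.eval (-(X i₀ : MvPolynomial (Fin n) K))) h
  rw [Polynomial.eval_multiset_prod, Polynomial.eval_finset_sum] at h2
  simp only [Polynomial.eval_mul, Polynomial.eval_C, Polynomial.eval_pow,
    Polynomial.eval_X, Multiset.map_map, Function.comp] at h2
  have h3 : ∑ j ∈ Finset.range (n + 1),
      esymm (Fin n) K j * (-(X i₀ : MvPolynomial (Fin n) K)) ^ (n - j)
      = ∑ x ∈ range (n + 1), (Multiset.map X univ.val).esymm x * (-X i₀) ^ (n - x) := by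
    refine Finset.sum_congr rfl fun j _ => ?_
    rw [esymm_eq_multiset_esymm]
  rw [h3, ← h2, Multiset.prod_eq_zero]
  refine Multiset.mem_map.2 ⟨i₀, by simp, by simp⟩

lemma aux_X_pow_eq (i₀ : Fin n) :
    (X i₀ : MvPolynomial (Fin n) K) ^ n =
      ∑ k ∈ range n,
        ((-1 : MvPolynomial (Fin n) K) ^ (n + k + 1) * esymm (Fin n) K (n - k)) * X i₀ ^ k := by
  have h0 := aux_esymm_rel (K := K) i₀
  rw [Finset.sum_range_succ'] at h0
  have e0 : esymm (Fin n) K 0 * (-(X i₀ : MvPolynomial (Fin n) K)) ^ (n - 0)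
      = (-1) ^ n * X i₀ ^ n := by
    rw [esymm_zero, one_mul, Nat.sub_zero, neg_pow]
  rw [e0] at h0
  have hs : (∑ j ∈ range n, esymm (Fin n) K (j + 1) * (-(X i₀ : MvPolynomial (Fin n) K)) ^ (n - (j + 1)))
      = ∑ k ∈ range n, (-1 : MvPolynomial (Fin n) K) ^ k * (esymm (Fin n) K (n - k) * X i₀ ^ k) := by
    rw [← Finset.sum_range_reflect]
    refine Finset.sum_congr rfl fun j hj => ?_
    rw [Finset.mem_range] at hj
    have h1 : n - 1 - j + 1 = n - j := by omega
    have h2 : n - (n - j) = j := by omega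
    rw [h1, h2, neg_pow]
    ring
  rw [hs] at h0
  have key : ∑ k ∈ range n, (-1 : MvPolynomial (Fin n) K) ^ k * (esymm (Fin n) K (n - k) * X i₀ ^ k)
      = -((-1) ^ n * X i₀ ^ n) := eq_neg_of_add_eq_zero_left h0
  have hone : ((-1 : MvPolynomial (Fin n) K) ^ (n + 1)) * ((-1) ^ (n + 1)) = 1 := by
    rw [← pow_add]
    exact Even.neg_one_pow ⟨n + 1, by ring⟩
  calc (X i₀ : MvPolynomial (Fin n) K) ^ n
      = (-1) ^ (n + 1) * ((-1) ^ (n + 1) * X i₀ ^ n) := by rw [← mul_assoc, hone, one_mul]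
    _ = (-1) ^ (n + 1) * (-((-1) ^ n * X i₀ ^ n)) := by rw [pow_succ]; ring
    _ = (-1) ^ (n + 1) * ∑ k ∈ range n, (-1 : MvPolynomial (Fin n) K) ^ k
          * (esymm (Fin n) K (n - k) * X i₀ ^ k) := by rw [key]
    _ = _ := by
        rw [Finset.mul_sum]
        refine Finset.sum_congr rfl fun k _ => ?_
        rw [pow_add, pow_add, pow_one]
        ring

lemma aux_isSymm_neg_one_pow (t : ℕ) :
    ((-1 : MvPolynomial (Fin n) K) ^ t).IsSymmetric := fun e => by simp

variable (K) in
/-- The module of combinations `∑ cₖ (X i₀)^k`, `k < n`, with symmetric coefficients. -/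
noncomputable def Msub (n : ℕ) (i₀ : Fin n) :
    Submodule (symmetricSubalgebra (Fin n) K) (MvPolynomial (Fin n) K) :=
  Submodule.span _ (Set.range fun k : Fin n => (X i₀ : MvPolynomial (Fin n) K) ^ (k : ℕ))

lemma aux_pow_mem (i₀ : Fin n) (t : ℕ) : (X i₀ : MvPolynomial (Fin n) K) ^ t ∈ Msub K n i₀ := by
  induction t using Nat.strong_induction_on with
  | _ t ih =>
    by_cases ht : t < n
    · exact Submodule.subset_span ⟨⟨t, ht⟩, rfl⟩
    · push_neg at ht
      have h1 : (X i₀ : MvPolynomial (Fin n) K) ^ t = X i₀ ^ (t - n) * X i₀ ^ n := by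
        rw [← pow_add]; congr 1; omega
      rw [h1, aux_X_pow_eq, Finset.mul_sum]
      refine Submodule.sum_mem _ fun k hk => ?_
      rw [Finset.mem_range] at hk
      have h2 : (X i₀ : MvPolynomial (Fin n) K) ^ (t - n) *
          (((-1) ^ (n + k + 1) * esymm (Fin n) K (n - k)) * X i₀ ^ k)
          = ((-1) ^ (n + k + 1) * esymm (Fin n) K (n - k)) * X i₀ ^ (t - n + k) := by
        rw [pow_add]; ring
      rw [h2]
      have hc : ((-1 : MvPolynomial (Fin n) K) ^ (n + k + 1) * esymm (Fin n) K (n - k)).IsSymmetric :=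
        (aux_isSymm_neg_one_pow _).mul (esymm_isSymmetric _ _ _)
      have := Submodule.smul_mem (Msub K n i₀)
        (⟨_, hc⟩ : symmetricSubalgebra (Fin n) K) (ih (t - n + k) (by omega))
      simpa [Subalgebra.smul_def, smul_eq_mul] using this

lemma aux_symm_mul_mem {i₀ : Fin n} {p h : MvPolynomial (Fin n) K} (hp : p.IsSymmetric)
    (hh : h ∈ Msub K n i₀) : p * h ∈ Msub K n i₀ := by
  have := Submodule.smul_mem (Msub K n i₀) (⟨p, hp⟩ : symmetricSubalgebra (Fin n) K) hh
  simpa [Subalgebra.smul_def, smul_eq_mul] using this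

lemma aux_mul_mem {i₀ : Fin n} {a b : MvPolynomial (Fin n) K}
    (ha : a ∈ Msub K n i₀) (hb : b ∈ Msub K n i₀) : a * b ∈ Msub K n i₀ := by
  have h := Submodule.mul_mem_mul ha hb
  rw [Msub, Submodule.span_mul_span] at h
  refine Submodule.span_le.2 ?_ h
  rintro x ⟨y, ⟨k, rfl⟩, z, ⟨l, rfl⟩, rfl⟩
  show (X i₀ : MvPolynomial (Fin n) K) ^ (k : ℕ) * X i₀ ^ (l : ℕ) ∈ Msub K n i₀
  rw [← pow_add]
  exact aux_pow_mem i₀ _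

lemma aux_adjoin_le_Msub {i₀ : Fin n} {h : MvPolynomial (Fin n) K}
    (hh : h ∈ Algebra.adjoin K
      (insert (X i₀ : MvPolynomial (Fin n) K) {p : MvPolynomial (Fin n) K | p.IsSymmetric})) :
    h ∈ Msub K n i₀ := by
  induction hh using Algebra.adjoin_induction with
  | mem x hx =>
    rcases hx with rfl | hx
    · simpa using aux_pow_mem i₀ 1
    · simpa using aux_symm_mul_mem hx (aux_pow_mem i₀ 0)
  | algebraMap r =>
    simpa using aux_symm_mul_mem (IsSymmetric.C r) (aux_pow_mem i₀ 0)
  | add x y _ _ hx hy => exact Submodule.add_mem _ hx hy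
  | mul x y _ _ hx hy => exact aux_mul_mem hx hy

section LemmaA
variable {m : ℕ}

lemma aux_commute (ρ : Equiv.Perm (Fin m)) (g : MvPolynomial (Fin (m + 1)) K) :
    finSuccEquiv K m (rename (Equiv.Perm.decomposeFin.symm (0, ρ)) g)
      = Polynomial.map (↑(rename (R := K) (⇑ρ)) : MvPolynomial (Fin m) K →+* MvPolynomial (Fin m) K)
          (finSuccEquiv K m g) := by
  have key : ((finSuccEquiv K m).toAlgHom.comp (rename (⇑(Equiv.Perm.decomposeFin.symm (0, ρ)))))
      = (Polynomial.mapAlgHom (rename (⇑ρ))).comp (finSuccEquiv K m).toAlgHom := by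
    apply MvPolynomial.algHom_ext
    intro i
    refine Fin.cases ?_ (fun j => ?_) i <;>
      simp [finSuccEquiv_X_zero, finSuccEquiv_X_succ,
        Equiv.Perm.decomposeFin_symm_apply_zero, Equiv.Perm.decomposeFin_symm_apply_succ]
  exact DFunLike.congr_fun key g

lemma aux_coeff_symm {h : MvPolynomial (Fin (m + 1)) K}
    (hinv : ∀ σ : Equiv.Perm (Fin (m + 1)), σ 0 = 0 → rename (⇑σ) h = h) (k : ℕ) :
    ((finSuccEquiv K m h).coeff k).IsSymmetric := by
  intro ρ
  have hc := aux_commute ρ h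
  rw [hinv _ (Equiv.Perm.decomposeFin_symm_apply_zero 0 ρ)] at hc
  have := congrArg (fun p => Polynomial.coeff p k) hc
  simpa [Polynomial.coeff_map] using this.symm

lemma aux_symm_C (q : MvPolynomial (Fin m) K) :
    (finSuccEquiv K m).symm (Polynomial.C q) = rename Fin.succ q := by
  have : finSuccEquiv K m (rename Fin.succ q) = Polynomial.C q := by
    induction q using MvPolynomial.induction_on with
    | C a => simp [finSuccEquiv_apply]
    | add p q hp hq => rw [map_add, map_add, hp, hq, map_add]
    | mul_X p i hp => rw [map_mul, map_mul, hp, rename_X, finSuccEquiv_X_succ, map_mul]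
  rw [← this, AlgEquiv.symm_apply_apply]
end LemmaA

section LemmaA2
variable {m : ℕ}

lemma aux_Q_coeff (k : ℕ) (hk : k ≤ m) :
    (∏ i : Fin m, (Polynomial.X +
        Polynomial.C (X i.succ : MvPolynomial (Fin (m + 1)) K))).coeff k
      = rename Fin.succ (esymm (Fin m) K (m - k)) := by
  have h := Finset.prod_X_add_C_coeff Finset.univ
    (fun i : Fin m => (X i.succ : MvPolynomial (Fin (m + 1)) K)) (k := k) (by simpa using hk)
  simp only [Finset.card_univ, Fintype.card_fin] at h
  rw [h, esymm, map_sum]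
  refine Finset.sum_congr rfl fun t _ => ?_
  rw [map_prod]
  simp [rename_X]

lemma aux_full_coeff (k : ℕ) (hk : k ≤ m + 1) :
    (∏ i : Fin (m + 1), (Polynomial.X +
        Polynomial.C (X i : MvPolynomial (Fin (m + 1)) K))).coeff k
      = esymm (Fin (m + 1)) K (m + 1 - k) := by
  have h := Finset.prod_X_add_C_coeff Finset.univ
    (fun i : Fin (m + 1) => (X i : MvPolynomial (Fin (m + 1)) K)) (k := k) (by simpa using hk)
  simp only [Finset.card_univ, Fintype.card_fin] at h
  rw [h, esymm]

lemma aux_esymm_rec (i : ℕ) (hj : i + 1 ≤ m) :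
    rename Fin.succ (esymm (Fin m) K (i + 1))
      = esymm (Fin (m + 1)) K (i + 1)
        - X 0 * rename Fin.succ (esymm (Fin m) K i) := by
  have hsplit := Fin.prod_univ_succ
    (fun i : Fin (m + 1) => (Polynomial.X + Polynomial.C (X i : MvPolynomial (Fin (m + 1)) K)))
  set k' := m - (i + 1) with hk'
  have hc := congrArg (fun p => Polynomial.coeff p (k' + 1)) hsplit
  simp only [add_mul, Polynomial.coeff_add, Polynomial.coeff_X_mul, Polynomial.coeff_C_mul] at hc
  rw [aux_full_coeff (k' + 1) (by omega), aux_Q_coeff k' (by omega),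
    aux_Q_coeff (k' + 1) (by omega)] at hc
  have e1 : m + 1 - (k' + 1) = i + 1 := by omega
  have e2 : m - k' = i + 1 := by omega
  have e3 : m - (k' + 1) = i := by omega
  rw [e1, e2, e3] at hc
  rw [hc]
  ring

/-- `B`: the subalgebra generated by `X 0` and the symmetric polynomials. -/
noncomputable abbrev Bsub (K : Type*) [CommRing K] (m : ℕ) :
    Subalgebra K (MvPolynomial (Fin (m + 1)) K) :=
  Algebra.adjoin K
    (insert (X 0 : MvPolynomial (Fin (m + 1)) K) {p : MvPolynomial (Fin (m + 1)) K | p.IsSymmetric})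

lemma aux_E'_mem (j : ℕ) (hj : j ≤ m) :
    rename Fin.succ (esymm (Fin m) K j) ∈ Bsub K m := by
  induction j with
  | zero => simp only [esymm_zero, map_one]; exact one_mem _
  | succ i ih =>
    rw [aux_esymm_rec i hj]
    exact sub_mem
      (Algebra.subset_adjoin (Or.inr (esymm_isSymmetric _ _ _)))
      (mul_mem (Algebra.subset_adjoin (Or.inl rfl)) (ih (by omega)))

lemma aux_rename_symm_mem {q : MvPolynomial (Fin m) K} (hq : q.IsSymmetric) :
    rename Fin.succ q ∈ Bsub K m := by
  obtain ⟨w, hw⟩ := esymmAlgHom_fin_surjective (R := K) (le_refl m) ⟨q, hq⟩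
  have hw' : q = aeval (fun i : Fin m => esymm (Fin m) K (i + 1)) w := by
    rw [← esymmAlgHom_apply, hw]
  set g' : Fin m → Bsub K m := fun i =>
    ⟨rename Fin.succ (esymm (Fin m) K (i + 1)), aux_E'_mem _ (by omega)⟩ with hg'
  have h1 : rename Fin.succ q = ((Bsub K m).val.comp (aeval g')) w := by
    rw [hw']
    calc (rename Fin.succ) ((aeval fun i : Fin m => esymm (Fin m) K (i + 1)) w)
        = ((rename (R := K) Fin.succ).comp (aeval fun i : Fin m => esymm (Fin m) K (i + 1))) w :=
          rfl
      _ = (aeval fun i : Fin m => rename Fin.succ (esymm (Fin m) K (i + 1))) w := by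
          rw [comp_aeval]
      _ = ((Bsub K m).val.comp (aeval g')) w := by rw [comp_aeval]; rfl
  rw [h1]
  exact ((aeval g') w).2

lemma aux_stab_mem {h : MvPolynomial (Fin (m + 1)) K}
    (hinv : ∀ σ : Equiv.Perm (Fin (m + 1)), σ 0 = 0 → rename (⇑σ) h = h) :
    h ∈ Bsub K m := by
  have hX0 : (finSuccEquiv K m).symm Polynomial.X = (X 0 : MvPolynomial (Fin (m + 1)) K) := by
    rw [← finSuccEquiv_X_zero, AlgEquiv.symm_apply_apply]
  have hh : h = (finSuccEquiv K m).symm (finSuccEquiv K m h) :=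
    (AlgEquiv.symm_apply_apply _ _).symm
  set F := finSuccEquiv K m h with hF
  have hexp : (finSuccEquiv K m).symm F
      = ∑ e ∈ F.support, rename Fin.succ (F.coeff e) * X 0 ^ e := by
    conv_lhs => rw [← Polynomial.sum_C_mul_X_pow_eq F]
    rw [Polynomial.sum, map_sum]
    refine Finset.sum_congr rfl fun e _ => ?_
    rw [map_mul, map_pow, aux_symm_C, hX0]
  rw [hh, hexp]
  refine Subalgebra.sum_mem _ fun e _ => ?_
  have hx : (X 0 : MvPolynomial (Fin (m + 1)) K) ^ e ∈ Bsub K m :=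
    pow_mem (Algebra.subset_adjoin (Set.mem_insert _ _)) e
  exact mul_mem (aux_rename_symm_mem (aux_coeff_symm hinv e)) hx

lemma lemA {m : ℕ} (i₀ : Fin (m + 1)) {h : MvPolynomial (Fin (m + 1)) K}
    (hinv : ∀ σ : Equiv.Perm (Fin (m + 1)), σ i₀ = i₀ → rename (⇑σ) h = h) :
    ∃ c : Fin (m + 1) → MvPolynomial (Fin (m + 1)) K, (∀ k, (c k).IsSymmetric) ∧
      h = ∑ k : Fin (m + 1), c k * X i₀ ^ (k : ℕ) := by
  set e : Equiv.Perm (Fin (m + 1)) := Equiv.swap 0 i₀ with he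
  have h0inv : ∀ σ : Equiv.Perm (Fin (m + 1)), σ 0 = 0 →
      rename (⇑σ) (rename (⇑e) h) = rename (⇑e) h := by
    intro σ hσ
    rw [rename_rename]
    have hcomp : (⇑σ ∘ ⇑e) = ⇑e ∘ (⇑(e * σ * e)) := by
      funext x
      simp [he, Equiv.Perm.mul_apply, Equiv.swap_apply_self]
    have h3 : rename (⇑(e * σ * e)) h = h := by
      refine hinv _ ?_
      simp [Equiv.Perm.mul_apply, he, Equiv.swap_apply_right, hσ, Equiv.swap_apply_left]
    rw [hcomp, ← rename_rename, h3]
  have hmem : rename (⇑e) h ∈ Msub K (m + 1) 0 :=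
    aux_adjoin_le_Msub (aux_stab_mem h0inv)
  rw [Msub, Submodule.mem_span_range_iff_exists_fun] at hmem
  obtain ⟨c, hc⟩ := hmem
  refine ⟨fun k => rename (⇑e) ((c k : MvPolynomial (Fin (m + 1)) K)),
    fun k => ((c k).2.rename e), ?_⟩
  have h4 : h = rename (⇑e) (rename (⇑e) h) := by
    rw [rename_rename]
    have : (⇑e ∘ ⇑e) = id := by funext x; simp [he, Equiv.swap_apply_self]
    rw [this, rename_id, AlgHom.id_apply]
  rw [h4, ← hc, map_sum]
  refine Finset.sum_congr rfl fun k _ => ?_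
  rw [Subalgebra.smul_def, smul_eq_mul, map_mul, map_pow, rename_X]
  simp [he, Equiv.swap_apply_left]

section Main
variable {F : Type*} [Field F] [CharZero F]

lemma lemC {m : ℕ} (d : ℕ) (i : Fin (m + 1)) (g : MvPolynomial (Fin (m + 1)) F) :
    ∃ c : Fin (m + 1) → MvPolynomial (Fin (m + 1)) F, (∀ k, (c k).IsSymmetric) ∧
      ∑ σ : Equiv.Perm (Fin (m + 1)), rename (⇑σ) g * X (σ i) ^ d
        = ∑ k : Fin (m + 1), c k * (∑ j : Fin (m + 1), X j ^ (d + (k : ℕ))) := by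
  classical
  set S : Finset (Equiv.Perm (Fin (m + 1))) := Finset.univ.filter (fun ρ => ρ i = i) with hS
  have hmemS : ∀ ρ : Equiv.Perm (Fin (m + 1)), ρ ∈ S ↔ ρ i = i := by intro ρ; simp [hS]
  set H : MvPolynomial (Fin (m + 1)) F := ∑ ρ ∈ S, rename (⇑ρ) g with hHdef
  have Hinv : ∀ τ : Equiv.Perm (Fin (m + 1)), τ i = i → rename (⇑τ) H = H := by
    intro τ hτ
    have h1 : rename (⇑τ) H = ∑ ρ ∈ S, rename (⇑(τ * ρ)) g := by
      rw [hHdef, map_sum]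
      exact Finset.sum_congr rfl fun ρ _ => by rw [rename_rename]; rfl
    rw [h1, hHdef]
    refine Finset.sum_equiv (Equiv.mulLeft τ) (fun ρ => ?_) (fun ρ _ => rfl)
    simp only [hmemS, Equiv.coe_mulLeft, Equiv.Perm.mul_apply]
    constructor
    · intro h; rw [h, hτ]
    · intro h; exact τ.injective (by rw [h, hτ])
  obtain ⟨c, hcsym, hH⟩ := lemA i Hinv
  have hN : S.card ≠ 0 :=
    Finset.card_ne_zero_of_mem ((hmemS 1).2 rfl)
  have fib : ∀ t : ℕ, (∑ σ : Equiv.Perm (Fin (m + 1)),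
        (X (σ i) : MvPolynomial (Fin (m + 1)) F) ^ t)
      = S.card • ∑ j : Fin (m + 1), (X j : MvPolynomial (Fin (m + 1)) F) ^ t := by
    intro t
    have himg : Finset.univ.image (fun σ : Equiv.Perm (Fin (m + 1)) => σ i) = Finset.univ :=
      Finset.eq_univ_of_forall fun j =>
        Finset.mem_image.2 ⟨Equiv.swap i j, Finset.mem_univ _, Equiv.swap_apply_left i j⟩
    have hcomp := Finset.sum_comp (s := (Finset.univ : Finset (Equiv.Perm (Fin (m + 1)))))
      (fun j => (X j : MvPolynomial (Fin (m + 1)) F) ^ t) (fun σ => σ i)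
    refine hcomp.trans ?_
    rw [himg, Finset.smul_sum]
    refine Finset.sum_congr rfl fun j _ => ?_
    congr 1
    refine (Finset.card_nbij' (fun σ => Equiv.swap i j * σ) (fun σ => Equiv.swap i j * σ)
      ?_ ?_ ?_ ?_).symm
    · intro σ hσ
      rw [Finset.mem_coe, hmemS] at hσ
      simp only [Finset.mem_coe, Finset.mem_filter, Finset.mem_univ, true_and, Equiv.Perm.mul_apply]
      rw [hσ, Equiv.swap_apply_left]
    · intro σ hσ
      simp only [Finset.mem_coe, Finset.mem_filter, Finset.mem_univ, true_and] at hσ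
      rw [Finset.mem_coe, hmemS, Equiv.Perm.mul_apply, hσ, Equiv.swap_apply_right]
    · intro σ _; simp [← mul_assoc]
    · intro σ _; simp [← mul_assoc]
  have step1 : ∑ σ : Equiv.Perm (Fin (m + 1)), rename (⇑σ) H * X (σ i) ^ d
      = S.card • ∑ σ : Equiv.Perm (Fin (m + 1)), rename (⇑σ) g * X (σ i) ^ d := by
    have expand : ∀ σ : Equiv.Perm (Fin (m + 1)), rename (⇑σ) H * X (σ i) ^ d
        = ∑ ρ ∈ S, rename (⇑(σ * ρ)) g * X (σ i) ^ d := by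
      intro σ
      rw [hHdef, map_sum, Finset.sum_mul]
      exact Finset.sum_congr rfl fun ρ _ => by rw [rename_rename]; rfl
    calc ∑ σ : Equiv.Perm (Fin (m + 1)), rename (⇑σ) H * X (σ i) ^ d
        = ∑ σ : Equiv.Perm (Fin (m + 1)), ∑ ρ ∈ S, rename (⇑(σ * ρ)) g * X (σ i) ^ d :=
          Finset.sum_congr rfl fun σ _ => expand σ
      _ = ∑ ρ ∈ S, ∑ σ : Equiv.Perm (Fin (m + 1)), rename (⇑(σ * ρ)) g * X (σ i) ^ d :=
          Finset.sum_comm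
      _ = ∑ ρ ∈ S, ∑ σ : Equiv.Perm (Fin (m + 1)), rename (⇑σ) g * X (σ i) ^ d := by
          refine Finset.sum_congr rfl fun ρ hρ => ?_
          have hρi : ρ i = i := (hmemS ρ).1 hρ
          refine Fintype.sum_equiv (Equiv.mulRight ρ) _ _ fun σ => ?_
          simp [Equiv.Perm.mul_apply, hρi]
      _ = S.card • ∑ σ : Equiv.Perm (Fin (m + 1)), rename (⇑σ) g * X (σ i) ^ d := by
          rw [Finset.sum_const]
  have step2 : ∑ σ : Equiv.Perm (Fin (m + 1)), rename (⇑σ) H * X (σ i) ^ d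
      = S.card • ∑ k : Fin (m + 1), c k * (∑ j : Fin (m + 1), X j ^ (d + (k : ℕ))) := by
    have hren : ∀ σ : Equiv.Perm (Fin (m + 1)),
        rename (⇑σ) H = ∑ k : Fin (m + 1), c k * X (σ i) ^ (k : ℕ) := by
      intro σ
      rw [hH, map_sum]
      exact Finset.sum_congr rfl fun k _ => by rw [map_mul, map_pow, rename_X, hcsym k σ]
    calc ∑ σ : Equiv.Perm (Fin (m + 1)), rename (⇑σ) H * X (σ i) ^ d
        = ∑ σ : Equiv.Perm (Fin (m + 1)), ∑ k : Fin (m + 1),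
            c k * X (σ i) ^ (d + (k : ℕ)) := by
          refine Finset.sum_congr rfl fun σ _ => ?_
          rw [hren σ, Finset.sum_mul]
          refine Finset.sum_congr rfl fun k _ => ?_
          rw [mul_assoc, ← pow_add, Nat.add_comm (k : ℕ) d]
      _ = ∑ k : Fin (m + 1), c k *
            ∑ σ : Equiv.Perm (Fin (m + 1)), X (σ i) ^ (d + (k : ℕ)) := by
          rw [Finset.sum_comm]
          exact Finset.sum_congr rfl fun k _ => by rw [Finset.mul_sum]
      _ = ∑ k : Fin (m + 1), c k *
            (S.card • ∑ j : Fin (m + 1), X j ^ (d + (k : ℕ))) := by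
          exact Finset.sum_congr rfl fun k _ => by rw [fib]
      _ = S.card • ∑ k : Fin (m + 1), c k * (∑ j : Fin (m + 1), X j ^ (d + (k : ℕ))) := by
          rw [Finset.smul_sum]
          exact Finset.sum_congr rfl fun k _ => mul_smul_comm _ _ _
  refine ⟨c, hcsym, ?_⟩
  have hcancel := step1.symm.trans step2
  rw [nsmul_eq_mul, nsmul_eq_mul] at hcancel
  exact mul_left_cancel₀ (Nat.cast_ne_zero.2 hN) hcancel

end Main

end LemmaA2
end Aux

/-- The ideal `(x₁^d,…,xₙ^d) ∩ K[x₁,…,xₙ]^{Sₙ}` of the ring of symmetric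
polynomials is generated by the power sums `p_d, p_{d+1}, …, p_{d+n-1}`:
a symmetric polynomial lies in `(x₁^d,…,xₙ^d)` iff it is a combination
`∑ₖ cₖ · p_{d+k}` with symmetric coefficients `cₖ`. -/
theorem symmetric_part_of_power_ideal
    (K : Type*) [Field K] [CharZero K] (n d : ℕ) (hn : 0 < n) (hd : 0 < d) :
    ∀ f : MvPolynomial (Fin n) K, f.IsSymmetric →
      (f ∈ Ideal.span (Set.range fun i : Fin n => (X i : MvPolynomial (Fin n) K) ^ d) ↔
        ∃ c : Fin n → MvPolynomial (Fin n) K,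
          (∀ k, (c k).IsSymmetric) ∧
          f = ∑ k : Fin n, c k * (∑ i : Fin n, (X i : MvPolynomial (Fin n) K) ^ (d + k.val))) := by
  obtain ⟨m, rfl⟩ : ∃ m, n = m + 1 := ⟨n - 1, by omega⟩
  intro f hf
  constructor
  · intro hmem
    rw [Ideal.mem_span_range_iff_exists_fun] at hmem
    obtain ⟨g, hg⟩ := hmem
    have key : ((m + 1).factorial : ℕ) • f
        = ∑ i : Fin (m + 1), ∑ σ : Equiv.Perm (Fin (m + 1)),
            rename (⇑σ) (g i) * X (σ i) ^ d := by
      have h1 : ∀ σ : Equiv.Perm (Fin (m + 1)),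
          f = ∑ i : Fin (m + 1), rename (⇑σ) (g i) * X (σ i) ^ d := by
        intro σ
        conv_lhs => rw [← hf σ, ← hg]
        rw [map_sum]
        exact Finset.sum_congr rfl fun i _ => by rw [map_mul, map_pow, rename_X]
      calc ((m + 1).factorial : ℕ) • f
          = ∑ _σ : Equiv.Perm (Fin (m + 1)), f := by
            rw [Finset.sum_const, Finset.card_univ, Fintype.card_perm, Fintype.card_fin]
        _ = ∑ σ : Equiv.Perm (Fin (m + 1)), ∑ i : Fin (m + 1),
              rename (⇑σ) (g i) * X (σ i) ^ d := Finset.sum_congr rfl fun σ _ => h1 σ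
        _ = _ := Finset.sum_comm
    choose c hcsym hc using fun i : Fin (m + 1) => lemC d i (g i)
    have key2 : ((m + 1).factorial : ℕ) • f
        = ∑ k : Fin (m + 1), (∑ i : Fin (m + 1), c i k) *
            (∑ j : Fin (m + 1), X j ^ (d + (k : ℕ))) := by
      rw [key]
      calc ∑ i : Fin (m + 1), ∑ σ : Equiv.Perm (Fin (m + 1)),
              rename (⇑σ) (g i) * X (σ i) ^ d
          = ∑ i : Fin (m + 1), ∑ k : Fin (m + 1), c i k *
              (∑ j : Fin (m + 1), X j ^ (d + (k : ℕ))) :=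
            Finset.sum_congr rfl fun i _ => hc i
        _ = ∑ k : Fin (m + 1), ∑ i : Fin (m + 1), c i k *
              (∑ j : Fin (m + 1), X j ^ (d + (k : ℕ))) := Finset.sum_comm
        _ = _ := Finset.sum_congr rfl fun k _ => (Finset.sum_mul _ _ _).symm
    have hne : (((m + 1).factorial : K)) ≠ 0 := Nat.cast_ne_zero.2 (Nat.factorial_ne_zero _)
    refine ⟨fun k => C (((m + 1).factorial : K))⁻¹ * ∑ i : Fin (m + 1), c i k,
      fun k => (IsSymmetric.C _).mul (fun e => by
        rw [map_sum]; exact Finset.sum_congr rfl fun i _ => hcsym i k e), ?_⟩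
    have hfac : (((m + 1).factorial : ℕ) : MvPolynomial (Fin (m + 1)) K)
        = C (((m + 1).factorial : K)) := (map_natCast (C : K →+* MvPolynomial (Fin (m + 1)) K) _).symm
    calc f = C (((m + 1).factorial : K))⁻¹ * (C (((m + 1).factorial : K)) * f) := by
          rw [← mul_assoc, ← C_mul, inv_mul_cancel₀ hne, C_1, one_mul]
      _ = C (((m + 1).factorial : K))⁻¹ * (((m + 1).factorial : ℕ) • f) := by
          rw [nsmul_eq_mul, hfac]
      _ = C (((m + 1).factorial : K))⁻¹ * ∑ k : Fin (m + 1), (∑ i : Fin (m + 1), c i k) *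
            (∑ j : Fin (m + 1), X j ^ (d + (k : ℕ))) := by rw [key2]
      _ = _ := by
          rw [Finset.mul_sum]
          exact Finset.sum_congr rfl fun k _ => by ring
  · rintro ⟨c, hcsym, rfl⟩
    refine Submodule.sum_mem _ fun k _ => Ideal.mul_mem_left _ _ ?_
    refine Submodule.sum_mem _ fun i _ => ?_
    rw [pow_add]
    exact Ideal.mul_mem_right _ _ (Ideal.subset_span ⟨i, rfl⟩)
end

section
/- Let K have characteristic zero, R = K[x₁,…,xₙ] with the Sₙ permutation action, and F = ⊕ᵢ R dxᵢ the free R-module of rank n on which Sₙ acts by σ(dxᵢ) = dx_{σ(i)} combined with the action on coefficients. Then the invariant submodule F^{Sₙ} is a free R^{Sₙ}-module of rank n generated by the elements Σᵢ xᵢ^k dxᵢ for k = 0, 1, …, n−1. -/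
open MvPolynomial Matrix

section Aux

lemma aux_prod_primes_dvd {R : Type*} [CommRing R] [IsDomain R] {ι : Type*} [DecidableEq ι]
    (s : Finset ι) (f : ι → R) :
    ∀ N : R, (∀ i ∈ s, Prime (f i)) → (∀ i ∈ s, ∀ j ∈ s, i ≠ j → ¬ f i ∣ f j) →
    (∀ i ∈ s, f i ∣ N) → (∏ i ∈ s, f i) ∣ N := by
  induction s using Finset.induction_on with
  | empty => intro N _ _ _; simp
  | @insert a t ha ih =>
    intro N hp hnd hd
    obtain ⟨N', rfl⟩ := hd a (Finset.mem_insert_self a t)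
    rw [Finset.prod_insert ha]
    refine mul_dvd_mul_left _ (ih N' (fun i hi => hp i (Finset.mem_insert_of_mem hi))
      (fun i hi j hj hij =>
        hnd i (Finset.mem_insert_of_mem hi) j (Finset.mem_insert_of_mem hj) hij) ?_)
    intro i hi
    have hpi := hp i (Finset.mem_insert_of_mem hi)
    have hdi : f i ∣ f a * N' := hd i (Finset.mem_insert_of_mem hi)
    rcases hpi.2.2 _ _ hdi with h | h
    · exact absurd h (hnd i (Finset.mem_insert_of_mem hi) a (Finset.mem_insert_self a t)
        (fun he => ha (he ▸ hi)))
    · exact h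

variable (K : Type*) [Field K] {n : ℕ}

/-- The substitution `Xᵢ ↦ Xⱼ`, fixing the other variables. -/
noncomputable def psiSub (i j : Fin n) :
    MvPolynomial (Fin n) K →ₐ[K] MvPolynomial (Fin n) K :=
  aeval (Function.update X i (X j))

lemma psiSub_X (i j l : Fin n) :
    psiSub K i j (X l) = if l = i then X j else X l := by
  simp [psiSub, Function.update_apply]

lemma psiSub_dvd_sub (i j : Fin n) (p : MvPolynomial (Fin n) K) :
    (X j - X i : MvPolynomial (Fin n) K) ∣ p - psiSub K i j p := by
  induction p using MvPolynomial.induction_on with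
  | C a => simp [psiSub]
  | add p q hp hq =>
    have h : p + q - psiSub K i j (p + q) = (p - psiSub K i j p) + (q - psiSub K i j q) := by
      rw [map_add]; ring
    rw [h]; exact dvd_add hp hq
  | mul_X p l hp =>
    have h : p * X l - psiSub K i j (p * X l) =
        (p - psiSub K i j p) * X l + psiSub K i j p * (X l - psiSub K i j (X l)) := by
      rw [_root_.map_mul]; ring
    rw [h]
    refine dvd_add (hp.mul_right _) (Dvd.dvd.mul_left ?_ _)
    rw [psiSub_X]
    split
    · next hl =>
      subst hl
      have : (X l - X j : MvPolynomial (Fin n) K) = -(X j - X l) := by ring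
      rw [this]; exact dvd_neg.mpr dvd_rfl
    · simp

lemma psiSub_dvd_of_eq_zero (i j : Fin n) {p : MvPolynomial (Fin n) K}
    (h : psiSub K i j p = 0) : (X j - X i : MvPolynomial (Fin n) K) ∣ p := by
  have := psiSub_dvd_sub K i j p
  rwa [h, sub_zero] at this

lemma psiSub_sub_eq_zero (i j : Fin n) (hij : i ≠ j) :
    psiSub K i j (X j - X i : MvPolynomial (Fin n) K) = 0 := by
  rw [map_sub, psiSub_X, psiSub_X, if_pos rfl, if_neg (Ne.symm hij), sub_self]

lemma prime_X_sub_X {i j : Fin n} (hij : i ≠ j) :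
    Prime (X j - X i : MvPolynomial (Fin n) K) := by
  have h0 : (X j - X i : MvPolynomial (Fin n) K) ≠ 0 :=
    sub_ne_zero.mpr (fun h => hij (MvPolynomial.X_injective h).symm)
  rw [← Ideal.span_singleton_prime h0]
  have hker : Ideal.span {(X j - X i : MvPolynomial (Fin n) K)} =
      RingHom.ker (psiSub K i j).toRingHom := by
    ext q
    rw [Ideal.mem_span_singleton, RingHom.mem_ker]
    constructor
    · rintro ⟨r, rfl⟩
      simp only [AlgHom.toRingHom_eq_coe, RingHom.coe_coe, _root_.map_mul,
        psiSub_sub_eq_zero K i j hij, zero_mul]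
    · intro hq
      exact psiSub_dvd_of_eq_zero K i j hq
  rw [hker]
  exact RingHom.ker_isPrime _

end Aux

/-- The invariant submodule `F^{Sₙ}` of the free module `F = ⊕ᵢ R·dxᵢ` (with
`σ(dxᵢ) = dx_{σ(i)}` combined with the action on coefficients, so that
`(σ·v)_j = σ(v_{σ⁻¹(j)})`) is a free `R^{Sₙ}`-module of rank `n` generated by
`ωₖ = ∑ᵢ xᵢ^k dxᵢ`, `k = 0,…,n-1`: the generators are invariant and every
invariant element is uniquely a combination of them with symmetric
coefficients. -/
theorem invariants_of_free_module_with_differentials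
    (K : Type*) [Field K] [CharZero K] (n : ℕ)
    (ω : Fin n → (Fin n → MvPolynomial (Fin n) K))
    (hω : ∀ k : Fin n, ω k = fun i => (X i : MvPolynomial (Fin n) K) ^ (k : ℕ)) :
    -- each generator `ωₖ` is invariant
    (∀ (k : Fin n) (σ : Equiv.Perm (Fin n)),
      (fun j => rename σ (ω k (σ⁻¹ j))) = ω k) ∧
    -- every invariant element is uniquely a combination with symmetric coefficients
    (∀ v : Fin n → MvPolynomial (Fin n) K,
      (∀ σ : Equiv.Perm (Fin n), (fun j => rename σ (v (σ⁻¹ j))) = v) →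
      ∃! c : Fin n → MvPolynomial (Fin n) K,
        (∀ k, (c k).IsSymmetric) ∧ v = ∑ k : Fin n, c k • ω k) := by
  classical
  constructor
  · intro k σ
    funext j
    simp [hω]
  · intro v hv
    set M : Matrix (Fin n) (Fin n) (MvPolynomial (Fin n) K) :=
      Matrix.vandermonde (fun i => (X i : MvPolynomial (Fin n) K)) with hM
    set Δ : MvPolynomial (Fin n) K := M.det with hΔ
    -- the Vandermonde determinant as a product over a sigma type
    have hΔfact : Δ = ∏ p ∈ Finset.univ.sigma (fun i : Fin n => Finset.Ioi i),
        ((X p.2 - X p.1 : MvPolynomial (Fin n) K)) := by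
      rw [hΔ, hM, Matrix.det_vandermonde, Finset.prod_sigma]
    have hΔ0 : Δ ≠ 0 := by
      rw [hΔfact]
      refine Finset.prod_ne_zero_iff.mpr ?_
      rintro ⟨i, j⟩ hp
      rw [Finset.mem_sigma] at hp
      have hij : i ≠ j := (Finset.mem_Ioi.mp hp.2).ne
      exact sub_ne_zero.mpr (fun h => hij (MvPolynomial.X_injective h).symm)
    -- injectivity of `M ᵥ*`
    have hinj : ∀ c c' : Fin n → MvPolynomial (Fin n) K, M *ᵥ c = M *ᵥ c' → c = c' := by
      intro c c' h
      have h2 := congrArg (fun w => M.adjugate *ᵥ w) h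
      simp only [Matrix.mulVec_mulVec, Matrix.adjugate_mul, Matrix.smul_mulVec,
        Matrix.one_mulVec] at h2
      funext k
      have := congrFun h2 k
      simp only [Pi.smul_apply, smul_eq_mul] at this
      exact mul_left_cancel₀ hΔ0 this
    -- the substitution identities for invariant vectors
    have hψv : ∀ i j : Fin n, psiSub K i j (v i) = psiSub K i j (v j) := by
      intro i j
      have hswap := congrFun (hv (Equiv.swap i j)) j
      simp only [Equiv.Perm.inv_def, Equiv.symm_swap, Equiv.swap_apply_right] at hswap
      rw [← hswap]
      have hcomp : (psiSub K i j).comp (rename (⇑(Equiv.swap i j))) = psiSub K i j := by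
        apply MvPolynomial.algHom_ext
        intro l
        simp only [AlgHom.comp_apply, rename_X, psiSub_X]
        rcases eq_or_ne l i with rfl | hli
        · simp [Equiv.swap_apply_left]
        · rcases eq_or_ne l j with rfl | hlj
          · simp [Equiv.swap_apply_right, hli]
          · rw [Equiv.swap_apply_of_ne_of_ne hli hlj, if_neg hli]
      exact (DFunLike.congr_fun hcomp (v i)).symm
    -- divisibility of the Cramer determinants by Δ
    have hdvd : ∀ k : Fin n, Δ ∣ Matrix.cramer M v k := by
      intro k
      rw [hΔfact]
      refine aux_prod_primes_dvd _ _ _ ?_ ?_ ?_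
      · rintro ⟨i, j⟩ hp
        rw [Finset.mem_sigma] at hp
        have hij : i ≠ j := (Finset.mem_Ioi.mp hp.2).ne
        exact prime_X_sub_X K hij
      · rintro ⟨i, j⟩ hp ⟨i', j'⟩ hp' hne hdvd
        rw [Finset.mem_sigma] at hp hp'
        have hij : i < j := Finset.mem_Ioi.mp hp.2
        have hij' : i' < j' := Finset.mem_Ioi.mp hp'.2
        obtain ⟨r, hr⟩ := hdvd
        have h0 : psiSub K i j (X j' - X i' : MvPolynomial (Fin n) K) = 0 := by
          rw [hr, _root_.map_mul, psiSub_sub_eq_zero K i j hij.ne, zero_mul]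
        rw [map_sub, psiSub_X, psiSub_X, sub_eq_zero] at h0
        -- case analysis
        by_cases hj'i : j' = i
        · by_cases hi'i : i' = i
          · exact absurd (hi'i.trans hj'i.symm) hij'.ne
          · rw [if_pos hj'i, if_neg hi'i] at h0
            have hji' : j = i' := MvPolynomial.X_injective h0
            have h1 : i' < i := lt_of_lt_of_eq hij' hj'i
            have h2 : i < i' := lt_of_lt_of_eq hij hji'
            exact absurd h2 (asymm h1)
        · by_cases hi'i : i' = i
          · rw [if_neg hj'i, if_pos hi'i] at h0
            have hjj : j' = j := MvPolynomial.X_injective h0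
            exact hne (by simp [hi'i, hjj])
          · rw [if_neg hj'i, if_neg hi'i] at h0
            exact absurd (MvPolynomial.X_injective h0) hij'.ne'
      · rintro ⟨i, j⟩ hp
        rw [Finset.mem_sigma] at hp
        have hij : i ≠ j := (Finset.mem_Ioi.mp hp.2).ne
        refine psiSub_dvd_of_eq_zero K i j ?_
        rw [Matrix.cramer_apply, ← RingHom.coe_coe (psiSub K i j),
          RingHom.map_det]
        refine Matrix.det_zero_of_row_eq hij ?_
        funext l
        show (psiSub K i j) ((M.updateCol k v) i l) = (psiSub K i j) ((M.updateCol k v) j l)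
        rw [Matrix.updateCol_apply, Matrix.updateCol_apply]
        split
        · exact hψv i j
        · simp [hM, Matrix.vandermonde_apply, map_pow, psiSub_X, Ne.symm hij]
    choose c hc using hdvd
    -- `c` solves the linear system
    have hMc : M *ᵥ c = v := by
      have h1 : M *ᵥ (Matrix.cramer M v) = Δ • v := Matrix.mulVec_cramer M v
      have h2 : (Matrix.cramer M v : Fin n → MvPolynomial (Fin n) K) = Δ • c := by
        funext k; rw [hc k]; rfl
      rw [h2, Matrix.mulVec_smul] at h1
      funext i
      have := congrFun h1 i
      simp only [Pi.smul_apply, smul_eq_mul] at this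
      exact mul_left_cancel₀ hΔ0 this
    -- re-expressing sums as `mulVec`
    have hsum : ∀ c' : Fin n → MvPolynomial (Fin n) K, (∑ k : Fin n, c' k • ω k) = M *ᵥ c' := by
      intro c'
      funext i
      rw [Finset.sum_apply]
      simp only [Pi.smul_apply, smul_eq_mul, hω, hM, Matrix.mulVec, dotProduct,
        Matrix.vandermonde_apply]
      exact Finset.sum_congr rfl (fun k _ => mul_comm _ _)
    refine ⟨c, ⟨?_, by rw [hsum, hMc]⟩, ?_⟩
    · -- symmetry of the coefficients
      intro k σ
      have hc' : M *ᵥ (fun m => rename σ (c m)) = v := by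
        funext i
        have hvi := congrFun (hv σ) i
        have : rename (⇑σ) ((M *ᵥ c) (σ⁻¹ i)) = (M *ᵥ (fun m => rename σ (c m))) i := by
          simp only [Matrix.mulVec, dotProduct, map_sum, hM, Matrix.vandermonde_apply,
            _root_.map_mul, map_pow, rename_X, Equiv.Perm.inv_def, Equiv.apply_symm_apply]
        rw [hMc] at this
        rw [← this]
        exact hvi
      exact congrFun (hinj _ _ (hc'.trans hMc.symm)) k
    · rintro c' ⟨_, hc'⟩
      refine hinj c' c ?_
      rw [hMc, ← hsum, ← hc']
end

section
/- Let K have characteristic zero, R = K[x₁,…,xₙ], and f₁,…,fₙ homogeneous polynomials satisfying fᵢ^σ = f_{σ(i)} for all σ ∈ Sₙ. Define g₁,…,gₙ by (g₁,…,gₙ)ᵗ = M (f₁,…,fₙ)ᵗ where M is the Vandermonde matrix with rows (x₁^k, x₂^k, …, xₙ^k) for k = 0,…,n−1, i.e., g_{k+1} = Σᵢ xᵢ^k fᵢ. Then (f₁,…,fₙ) is a complete intersection ideal (i.e., of finite colength) if and only if (g₁,…,gₙ) is a complete intersection ideal. -/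
open MvPolynomial

set_option synthInstance.maxHeartbeats 1000000
set_option maxHeartbeats 2000000

section Aux

variable {K : Type*} [Field K] {n : ℕ}

/-- A homogeneous component of a multiple of a homogeneous member of an ideal stays in the
ideal. -/
lemma aux_hc_mul_mem (I : Ideal (MvPolynomial (Fin n) K)) {f : MvPolynomial (Fin n) K}
    (hfI : f ∈ I) {d : ℕ} (hf : f.IsHomogeneous d) (c : MvPolynomial (Fin n) K) (N : ℕ) :
    homogeneousComponent N (c * f) ∈ I := by
  have hc : c * f = ∑ k ∈ Finset.range (c.totalDegree + 1), homogeneousComponent k c * f := by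
    rw [← Finset.sum_mul, sum_homogeneousComponent]
  rw [hc, map_sum]
  refine Ideal.sum_mem _ fun k _ => ?_
  rw [homogeneousComponent_of_mem
    ((mem_homogeneousSubmodule _ _).2 ((homogeneousComponent_isHomogeneous k c).mul hf))]
  split
  · exact I.mul_mem_left _ hfI
  · exact I.zero_mem

/-- Homogeneous components of members of an ideal spanned by homogeneous elements stay in the
ideal. -/
lemma aux_hc_mem_span (f : Fin n → MvPolynomial (Fin n) K) (d : Fin n → ℕ)
    (hf : ∀ i, (f i).IsHomogeneous (d i)) {p : MvPolynomial (Fin n) K}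
    (hp : p ∈ Ideal.span (Set.range f)) (N : ℕ) :
    homogeneousComponent N p ∈ Ideal.span (Set.range f) := by
  rw [Ideal.mem_span_range_iff_exists_fun] at hp
  obtain ⟨c, rfl⟩ := hp
  rw [map_sum]
  exact Ideal.sum_mem _ fun i _ =>
    aux_hc_mul_mem _ (Ideal.subset_span (Set.mem_range_self i)) (hf i) (c i) N

/-- If every variable has a power inside `I`, the quotient is finite dimensional. -/
lemma aux_fd_of_pow_mem (I : Ideal (MvPolynomial (Fin n) K))
    (h : ∀ i : Fin n, ∃ N, (X i : MvPolynomial (Fin n) K) ^ N ∈ I) :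
    FiniteDimensional K (MvPolynomial (Fin n) K ⧸ I) := by
  haveI hFT : Algebra.FiniteType K (MvPolynomial (Fin n) K ⧸ I) :=
    Algebra.FiniteType.of_surjective (Ideal.Quotient.mkₐ K I)
      (Ideal.Quotient.mkₐ_surjective K I)
  have hadj : Algebra.adjoin K
      (Set.range fun i : Fin n => Ideal.Quotient.mkₐ K I (X i)) = ⊤ := by
    have h1 : (Set.range fun i : Fin n => Ideal.Quotient.mkₐ K I (X i))
        = Ideal.Quotient.mkₐ K I '' Set.range X := by
      rw [← Set.range_comp]; rfl
    rw [h1, ← AlgHom.map_adjoin, adjoin_range_X, Algebra.map_top]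
    exact (AlgHom.range_eq_top _).mpr (Ideal.Quotient.mkₐ_surjective K I)
  have key : (⊤ : Subalgebra K (MvPolynomial (Fin n) K ⧸ I)) ≤
      integralClosure K (MvPolynomial (Fin n) K ⧸ I) := by
    rw [← hadj]
    refine Algebra.adjoin_le ?_
    rintro x ⟨i, rfl⟩
    obtain ⟨N, hN⟩ := h i
    have hz : (Ideal.Quotient.mkₐ K I (X i)) ^ (N + 1) = 0 := by
      rw [← map_pow]
      exact Ideal.Quotient.eq_zero_iff_mem.2 (by rw [pow_succ]; exact I.mul_mem_right _ hN)
    refine ⟨Polynomial.X ^ (N + 1), Polynomial.monic_X_pow _, ?_⟩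
    rw [Polynomial.eval₂_X_pow]
    exact hz
  haveI hint : Algebra.IsIntegral K (MvPolynomial (Fin n) K ⧸ I) :=
    integralClosure_eq_top_iff.mp (top_le_iff.mp key)
  exact Algebra.IsIntegral.finite

/-- Conversely, if the quotient by an ideal spanned by homogeneous elements is finite
dimensional, then every variable has a power inside the ideal. -/
lemma aux_pow_mem_of_fd (f : Fin n → MvPolynomial (Fin n) K) (d : Fin n → ℕ)
    (hf : ∀ i, (f i).IsHomogeneous (d i))
    (hFD : FiniteDimensional K (MvPolynomial (Fin n) K ⧸ Ideal.span (Set.range f)))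
    (i : Fin n) :
    ∃ N, (X i : MvPolynomial (Fin n) K) ^ N ∈ Ideal.span (Set.range f) := by
  set I := Ideal.span (Set.range f) with hI
  have hint : IsIntegral K (Ideal.Quotient.mkₐ K I (X i)) :=
    Algebra.IsIntegral.isIntegral _
  obtain ⟨p, hpm, hp0⟩ := hint
  refine ⟨p.natDegree, ?_⟩
  have hq : (Polynomial.aeval (X i : MvPolynomial (Fin n) K)) p ∈ I := by
    rw [← Ideal.Quotient.eq_zero_iff_mem (I := I)]
    have h2 : (Ideal.Quotient.mk I) ((Polynomial.aeval (X i : MvPolynomial (Fin n) K)) p)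
        = (Polynomial.aeval (Ideal.Quotient.mkₐ K I (X i))) p :=
      (Polynomial.aeval_algHom_apply (Ideal.Quotient.mkₐ K I) _ p).symm
    exact h2.trans hp0
  have hcomp : homogeneousComponent p.natDegree
      ((Polynomial.aeval (X i : MvPolynomial (Fin n) K)) p)
      = (X i : MvPolynomial (Fin n) K) ^ p.natDegree := by
    rw [Polynomial.aeval_eq_sum_range, map_sum]
    have hterm : ∀ k ∈ Finset.range (p.natDegree + 1),
        homogeneousComponent p.natDegree (p.coeff k • (X i : MvPolynomial (Fin n) K) ^ k)
        = if p.natDegree = k then p.coeff k • (X i : MvPolynomial (Fin n) K) ^ k else 0 := by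
      intro k _
      rw [map_smul, homogeneousComponent_of_mem
        ((mem_homogeneousSubmodule _ _).2 (isHomogeneous_X_pow i k))]
      split
      · rfl
      · simp
    rw [Finset.sum_congr rfl hterm, Finset.sum_ite_eq,
      if_pos (Finset.mem_range.mpr (Nat.lt_succ_self _)),
      Polynomial.Monic.coeff_natDegree hpm, one_smul]
  rw [← hcomp]
  exact aux_hc_mem_span f d hf hq _

/-- The key Vandermonde argument: each `f j` lies in every prime containing the `g`'s. -/
lemma aux_mem_prime [CharZero K] (f g : Fin n → MvPolynomial (Fin n) K)
    (hequiv : ∀ (σ : Equiv.Perm (Fin n)) (i : Fin n), rename σ (f i) = f (σ i))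
    (hg : ∀ k : Fin n, g k = ∑ i : Fin n, (X i : MvPolynomial (Fin n) K) ^ (k : ℕ) * f i)
    (P : Ideal (MvPolynomial (Fin n) K)) (hP : P.IsPrime)
    (hle : Ideal.span (Set.range g) ≤ P) (j : Fin n) : f j ∈ P := by
  classical
  haveI := hP
  set A := MvPolynomial (Fin n) K ⧸ P with hA
  set L := FractionRing A with hL
  haveI : CharZero A := charZero_of_injective_algebraMap (algebraMap K A).injective
  haveI : CharZero L := charZero_of_injective_algebraMap (IsFractionRing.injective A L)
  set ψ : MvPolynomial (Fin n) K →+* L :=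
    (algebraMap A L).comp (Ideal.Quotient.mk P) with hψ
  have hψ0 : ∀ q, q ∈ P → ψ q = 0 := by
    intro q hq
    have : Ideal.Quotient.mk P q = 0 := Ideal.Quotient.eq_zero_iff_mem.mpr hq
    simp [hψ, this]
  have hψ0' : ∀ q, ψ q = 0 → q ∈ P := by
    intro q hq
    have h1 : algebraMap A L (Ideal.Quotient.mk P q) = algebraMap A L 0 := by
      simpa [hψ] using hq
    have h2 := IsFractionRing.injective A L h1
    exact Ideal.Quotient.eq_zero_iff_mem.mp h2
  -- Step 1 : equal variable values give equal f values
  have step1 : ∀ i i' : Fin n, ψ (X i) = ψ (X i') → ψ (f i) = ψ (f i') := by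
    intro i i' h
    have hmk : Ideal.Quotient.mk P (X i : MvPolynomial (Fin n) K)
        = Ideal.Quotient.mk P (X i') := by
      apply IsFractionRing.injective A L
      simpa [hψ] using h
    set σ := Equiv.swap i i' with hσ
    have hcomp : (Ideal.Quotient.mkₐ K P).comp
        (rename σ : MvPolynomial (Fin n) K →ₐ[K] MvPolynomial (Fin n) K)
        = Ideal.Quotient.mkₐ K P := by
      apply MvPolynomial.algHom_ext
      intro k
      simp only [AlgHom.comp_apply, rename_X, Ideal.Quotient.mkₐ_eq_mk]
      rcases eq_or_ne k i with rfl | hki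
      · rw [Equiv.swap_apply_left]; exact hmk.symm
      rcases eq_or_ne k i' with rfl | hki'
      · rw [Equiv.swap_apply_right]; exact hmk
      · rw [Equiv.swap_apply_of_ne_of_ne hki hki']
    have h1 : Ideal.Quotient.mk P (f i') = Ideal.Quotient.mk P (f i) := by
      have h2 : f i' = rename σ (f i) := by
        rw [hequiv σ i, hσ, Equiv.swap_apply_left]
      rw [h2]
      have := AlgHom.congr_fun hcomp (f i)
      simpa [Ideal.Quotient.mkₐ_eq_mk] using this
    simp [hψ, h1]
  -- Step 2 : Vandermonde relations
  have hrel : ∀ k : ℕ, k < n → ∑ i : Fin n, ψ (f i) * ψ (X i) ^ k = 0 := by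
    intro k hk
    have hgP : g ⟨k, hk⟩ ∈ P := hle (Ideal.subset_span (Set.mem_range_self _))
    have h1 : ψ (g ⟨k, hk⟩) = 0 := hψ0 _ hgP
    rw [hg ⟨k, hk⟩, map_sum] at h1
    have h2 : ∀ i : Fin n, ψ ((X i : MvPolynomial (Fin n) K) ^ ((⟨k, hk⟩ : Fin n) : ℕ) * f i)
        = ψ (f i) * ψ (X i) ^ k := by
      intro i
      rw [map_mul, map_pow, mul_comm]
    rw [Finset.sum_congr rfl fun i _ => h2 i] at h1
    exact h1
  -- Step 3 : group by fibers and apply Vandermonde nondegeneracy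
  set T : Finset L := Finset.image (fun i => ψ (X i)) Finset.univ with hT
  set m := T.card with hm
  have hmn : m ≤ n := le_trans Finset.card_image_le (by simp)
  set e : Fin m ≃ {x // x ∈ T} := T.equivFin.symm with he
  set w : Fin m → L := fun j => (e j : L) with hw
  have hwinj : Function.Injective w := fun j j' h => e.injective (Subtype.ext h)
  set u : L → L := fun t => ∑ i ∈ Finset.univ.filter (fun i => ψ (X i) = t), ψ (f i)
    with hu
  have hfib : ∀ k : ℕ, k < n → ∑ t ∈ T, u t * t ^ k = 0 := by
    intro k hk
    have e1 : ∑ t ∈ T, ∑ i ∈ Finset.univ.filter (fun i => ψ (X i) = t),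
        (ψ (f i) * ψ (X i) ^ k) = ∑ i : Fin n, ψ (f i) * ψ (X i) ^ k :=
      Finset.sum_fiberwise_of_maps_to
        (fun i _ => Finset.mem_image_of_mem _ (Finset.mem_univ i)) _
    have e2 : ∑ t ∈ T, u t * t ^ k = ∑ t ∈ T, ∑ i ∈ Finset.univ.filter
        (fun i => ψ (X i) = t), (ψ (f i) * ψ (X i) ^ k) := by
      refine Finset.sum_congr rfl fun t _ => ?_
      rw [hu, Finset.sum_mul]
      refine Finset.sum_congr rfl fun i hi => ?_
      rw [(Finset.mem_filter.mp hi).2]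
    rw [e2, e1]
    exact hrel k hk
  have hvand : ∀ k : Fin m, ∑ j' : Fin m, u (w j') * w j' ^ (k : ℕ) = 0 := by
    intro k
    have h1 := hfib k (lt_of_lt_of_le k.2 hmn)
    have h2 : ∑ t ∈ T, u t * t ^ (k : ℕ)
        = ∑ j' : Fin m, u (w j') * w j' ^ (k : ℕ) := by
      rw [← Finset.sum_coe_sort T (fun t => u t * t ^ (k : ℕ))]
      exact (Equiv.sum_comp e fun t => u (t : L) * (t : L) ^ (k : ℕ)).symm
    rw [← h2]
    exact h1
  have hu0 : (fun j' : Fin m => u (w j')) = 0 :=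
    Matrix.eq_zero_of_forall_pow_sum_mul_pow_eq_zero hwinj hvand
  -- Step 4 : conclude
  have hjT : ψ (X j) ∈ T := Finset.mem_image_of_mem _ (Finset.mem_univ j)
  obtain ⟨j0, hj0⟩ : ∃ j0 : Fin m, w j0 = ψ (X j) :=
    ⟨e.symm ⟨_, hjT⟩, by simp [hw]⟩
  have huj : u (ψ (X j)) = 0 := by
    have := congrFun hu0 j0
    rwa [hj0] at this
  have hconst : ∀ i ∈ Finset.univ.filter (fun i => ψ (X i) = ψ (X j)),
      ψ (f i) = ψ (f j) := fun i hi => step1 i j (Finset.mem_filter.mp hi).2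
  have huj' : ((Finset.univ.filter (fun i => ψ (X i) = ψ (X j))).card : L) * ψ (f j) = 0 := by
    have h1 : u (ψ (X j)) = ∑ i ∈ Finset.univ.filter (fun i => ψ (X i) = ψ (X j)),
        ψ (f i) := rfl
    rw [h1, Finset.sum_congr rfl hconst, Finset.sum_const, nsmul_eq_mul] at huj
    exact huj
  have hcard : ((Finset.univ.filter (fun i => ψ (X i) = ψ (X j))).card : L) ≠ 0 := by
    rw [Nat.cast_ne_zero]
    exact Finset.card_ne_zero_of_mem (Finset.mem_filter.mpr ⟨Finset.mem_univ j, rfl⟩)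
  have hzero : ψ (f j) = 0 := by
    rcases mul_eq_zero.mp huj' with h | h
    · exact absurd h hcard
    · exact h
  exact hψ0' _ hzero

end Aux

/-- Proposition 6.1: let `f₁,…,fₙ` be homogeneous polynomials with
`fᵢ^σ = f_{σ(i)}` for all `σ ∈ Sₙ`, and let `g_{k+1} = ∑ᵢ xᵢ^k fᵢ`
(`k = 0,…,n-1`, i.e. `(g) = M·(f)` for the Vandermonde matrix `M`). Then
`(f₁,…,fₙ)` is a complete intersection ideal (finite colength) iff
`(g₁,…,gₙ)` is. -/
theorem vandermonde_transform_complete_intersection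
    (K : Type*) [Field K] [CharZero K] (n : ℕ)
    (f : Fin n → MvPolynomial (Fin n) K)
    (hhom : ∀ i, ∃ d, (f i).IsHomogeneous d)
    (hequiv : ∀ (σ : Equiv.Perm (Fin n)) (i : Fin n), rename σ (f i) = f (σ i))
    (g : Fin n → MvPolynomial (Fin n) K)
    (hg : ∀ k : Fin n, g k = ∑ i : Fin n, (X i : MvPolynomial (Fin n) K) ^ (k : ℕ) * f i) :
    FiniteDimensional K (MvPolynomial (Fin n) K ⧸ Ideal.span (Set.range f)) ↔
      FiniteDimensional K (MvPolynomial (Fin n) K ⧸ Ideal.span (Set.range g)) := by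
  set d : Fin n → ℕ := fun i => (hhom i).choose with hd
  have hfd : ∀ i, (f i).IsHomogeneous (d i) := fun i => (hhom i).choose_spec
  constructor
  · intro hF
    apply aux_fd_of_pow_mem
    intro i
    obtain ⟨N, hN⟩ := aux_pow_mem_of_fd f d hfd hF i
    have hrad : Ideal.span (Set.range f) ≤ (Ideal.span (Set.range g)).radical := by
      rw [Ideal.span_le]
      rintro x ⟨j, rfl⟩
      rw [Ideal.radical_eq_sInf]
      refine Submodule.mem_sInf.mpr ?_
      rintro P ⟨hle, hprime⟩
      exact aux_mem_prime f g hequiv hg P hprime hle j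
    have h1 : (X i : MvPolynomial (Fin n) K) ∈ (Ideal.span (Set.range g)).radical := by
      rw [← Ideal.radical_idem (Ideal.span (Set.range g))]
      exact Ideal.mem_radical_iff.mpr ⟨N, hrad hN⟩
    exact Ideal.mem_radical_iff.mp h1
  · intro hG
    have hle : Ideal.span (Set.range g) ≤ Ideal.span (Set.range f) := by
      rw [Ideal.span_le]
      rintro x ⟨k, rfl⟩
      rw [hg k]
      exact Ideal.sum_mem _ fun i _ =>
        Ideal.mul_mem_left _ _ (Ideal.subset_span (Set.mem_range_self i))
    let φ : (MvPolynomial (Fin n) K ⧸ Ideal.span (Set.range g))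
        →ₐ[K] (MvPolynomial (Fin n) K ⧸ Ideal.span (Set.range f)) :=
      Ideal.Quotient.liftₐ _ (Ideal.Quotient.mkₐ K _) (fun a ha => by
        rw [Ideal.Quotient.mkₐ_eq_mk, Ideal.Quotient.eq_zero_iff_mem]
        exact hle ha)
    have hsurj : Function.Surjective φ := by
      intro y
      obtain ⟨a, rfl⟩ := Ideal.Quotient.mkₐ_surjective K _ y
      exact ⟨Ideal.Quotient.mk _ a, rfl⟩
    exact Module.Finite.of_surjective φ.toLinearMap hsurj
end

section
/- Let K have characteristic zero, n = n₁ + ⋯ + n_r, G = S_{n₁} × ⋯ × S_{n_r} a Young subgroup acting on R = K[x₁,…,xₙ] by block-wise permutation of the variables, and f₁,…,fₙ a homogeneous regular sequence satisfying fᵢ^σ = f_{σ(i)} for all σ ∈ G. Define g₁,…,gₙ via the block-diagonal matrix diag(V₁,…,V_r) applied to (f₁,…,fₙ)ᵗ, where Vᵢ is the Vandermonde matrix in the variables of the i-th block (rows are k-th powers of those variables for k = 0,…,nᵢ−1). Then (g₁,…,gₙ) = (f₁,…,fₙ) ∩ R^G as ideals of R^G. -/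
open MvPolynomial


open MvPolynomial Finset

noncomputable section Cor62Aux

namespace Cor62

variable {K : Type*} [CommRing K] {σ τ : Type*} [DecidableEq σ] [DecidableEq τ]

/-- elementary symmetric polynomial in a subset of the variables -/
def fesymm (K : Type*) [CommRing K] (B : Finset σ) (k : ℕ) : MvPolynomial σ K :=
  ∑ T ∈ B.powersetCard k, ∏ s ∈ T, X s

@[simp] lemma fesymm_zero (B : Finset σ) : fesymm K B 0 = 1 := by
  simp [fesymm]

lemma rename_fesymm (f : σ ↪ τ) (B : Finset σ) (k : ℕ) :
    rename f (fesymm K B k) = fesymm K (B.map f) k := by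
  rw [fesymm, map_sum, fesymm, Finset.powersetCard_map, Finset.sum_map]
  refine Finset.sum_congr rfl fun T _ => ?_
  rw [map_prod]
  show _ = ∏ s ∈ Finset.mapEmbedding f T, X s
  rw [Finset.mapEmbedding_apply, Finset.prod_map]
  simp

lemma rename_perm_fesymm (e : Equiv.Perm σ) (B : Finset σ) (hB : ∀ s ∈ B, e s ∈ B) (k : ℕ) :
    rename e (fesymm K B k) = fesymm K B k := by
  have hmap : B.map e.toEmbedding = B := by
    apply Finset.eq_of_subset_of_card_le
    · intro t ht
      rcases Finset.mem_map.1 ht with ⟨s, hs, rfl⟩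
      exact hB s hs
    · rw [Finset.card_map]
  have := rename_fesymm (K := K) e.toEmbedding B k
  rwa [hmap] at this

lemma fesymm_eq_zero (B : Finset σ) {k : ℕ} (h : B.card < k) : fesymm K B k = 0 := by
  rw [fesymm, Finset.powersetCard_eq_empty.2 h, Finset.sum_empty]

lemma fesymm_singleton_one (a : σ) : fesymm K {a} 1 = X a := by
  have : ({a} : Finset σ).powersetCard 1 = {{a}} := by
    simpa using Finset.powersetCard_self ({a} : Finset σ)
  rw [fesymm, this]
  simp

lemma fesymm_recurrence {a : σ} {B : Finset σ} (ha : a ∈ B) (k : ℕ) :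
    fesymm K B (k + 1) = fesymm K (B.erase a) (k + 1) + X a * fesymm K (B.erase a) k := by
  conv_lhs => rw [fesymm, ← Finset.insert_erase ha,
    Finset.powersetCard_succ_insert (Finset.notMem_erase a B)]
  rw [Finset.sum_union]
  · congr 1
    rw [Finset.sum_image, fesymm, Finset.mul_sum]
    · refine Finset.sum_congr rfl fun T hT => ?_
      have haT : a ∉ T := fun h => Finset.notMem_erase a B
        ((Finset.mem_powersetCard.1 hT).1 h)
      rw [Finset.prod_insert haT]
    · intro T hT T' hT' h
      have haT : a ∉ T := fun h => Finset.notMem_erase a B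
        ((Finset.mem_powersetCard.1 hT).1 h)
      have haT' : a ∉ T' := fun h => Finset.notMem_erase a B
        ((Finset.mem_powersetCard.1 hT').1 h)
      have := congrArg (Finset.erase · a) h
      simpa [Finset.erase_insert, haT, haT'] using this
  · rw [Finset.disjoint_left]
    intro T hT hT'
    rcases Finset.mem_image.1 hT' with ⟨T', _, rfl⟩
    exact Finset.notMem_erase a B ((Finset.mem_powersetCard.1 hT).1 (Finset.mem_insert_self a T'))

lemma X_pow_card_eq {a : σ} {B : Finset σ} (ha : a ∈ B) :
    (X a : MvPolynomial σ K) ^ B.card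
      = ∑ j ∈ Finset.range B.card, (-1 : MvPolynomial σ K) ^ j * fesymm K B (j + 1)
          * (X a) ^ (B.card - 1 - j) := by
  have hesymm : ∀ n, (B.val.map (X : σ → MvPolynomial σ K)).esymm n = fesymm K B n := by
    intro n; rw [Finset.esymm_map_val]; rfl
  have hcard : Multiset.card (B.val.map (X : σ → MvPolynomial σ K)) = B.card := by simp
  have hv := Multiset.prod_X_sub_X_eq_sum_esymm (B.val.map (X : σ → MvPolynomial σ K))
  have h0 := congrArg (Polynomial.eval (X a : MvPolynomial σ K)) hv
  rw [Polynomial.eval_multiset_prod, Multiset.map_map] at h0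
  rw [Multiset.map_map] at h0
  have hzero : (Multiset.map ((Polynomial.eval (X a) ∘ fun t => Polynomial.X - Polynomial.C t)
      ∘ (X : σ → MvPolynomial σ K)) B.val).prod = 0 := by
    apply Multiset.prod_eq_zero
    rw [Multiset.mem_map]
    exact ⟨a, ha, by simp⟩
  rw [hzero] at h0
  -- h0 : 0 = eval of sum
  rw [Polynomial.eval_finset_sum] at h0
  simp only [Polynomial.eval_mul, Polynomial.eval_pow, Polynomial.eval_neg, Polynomial.eval_one,
    Polynomial.eval_C, Polynomial.eval_X, hesymm, hcard] at h0
  rw [Finset.sum_range_succ'] at h0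
  simp only [pow_zero, fesymm_zero, Nat.sub_zero, one_mul] at h0
  have h1 : (X a : MvPolynomial σ K) ^ B.card
      = ∑ j ∈ Finset.range B.card,
          -((-1 : MvPolynomial σ K) ^ (j + 1) * (fesymm K B (j + 1) * X a ^ (B.card - (j + 1)))) := by
    rw [Finset.sum_neg_distrib]
    linear_combination -h0
  rw [h1]
  refine Finset.sum_congr rfl fun j hj => ?_
  have he : B.card - (j + 1) = B.card - 1 - j := by omega
  rw [he, pow_succ]
  ring

end Cor62

namespace Cor62

variable {K : Type*} [CommRing K]

lemma esymm_eq_fesymm (α : Type*) [Fintype α] [DecidableEq α] (k : ℕ) :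
    esymm α K k = fesymm K Finset.univ k := rfl

/-- Invariants under fiberwise permutations lie in the algebra generated by the
fiberwise elementary symmetric polynomials. -/
theorem invN :
    ∀ (n : ℕ) (σ ι : Type) [Fintype σ] [DecidableEq σ] [Fintype ι] [DecidableEq ι]
      (π : σ → ι), Fintype.card ι ≤ n →
      ∀ q : MvPolynomial σ K,
        (∀ e : Equiv.Perm σ, (∀ s, π (e s) = π s) → rename e q = q) →
        q ∈ Algebra.adjoin K
          {p : MvPolynomial σ K | ∃ (i : ι) (k : ℕ),
            p = fesymm K (Finset.univ.filter (fun s => π s = i)) k} := by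
  intro n
  induction n with
  | zero =>
    intro σ ι _ _ _ _ π hcard q _
    have hι : IsEmpty ι := Fintype.card_eq_zero_iff.mp (Nat.le_zero.mp hcard)
    have hσ : IsEmpty σ := ⟨fun s => hι.elim (π s)⟩
    obtain ⟨c, rfl⟩ := MvPolynomial.C_surjective σ q
    rw [← MvPolynomial.algebraMap_eq]
    exact Subalgebra.algebraMap_mem _ c
  | succ n ih =>
    intro σ ι _ _ _ _ π hcard q hq
    rcases Nat.lt_or_ge (Fintype.card ι) (n + 1) with hlt | hge
    · exact ih σ ι π (Nat.lt_succ_iff.mp hlt) q hq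
    have : Nonempty ι := Fintype.card_pos_iff.mp (by omega)
    obtain ⟨i0⟩ := this
    classical
    set α := {s : σ // π s = i0} with hα
    set β := {s : σ // ¬ π s = i0} with hβ
    set E : α ⊕ β ≃ σ := Equiv.sumCompl (fun s => π s = i0) with hE
    set Φ := MvPolynomial.sumAlgEquiv K α β with hΦ
    have hEinl : ∀ a : α, E (Sum.inl a) = (a : σ) := fun a => Equiv.sumCompl_apply_inl a
    have hEinr : ∀ b : β, E (Sum.inr b) = (b : σ) := fun b => Equiv.sumCompl_apply_inr b
    have hEsinl : ∀ a : α, E.symm (a : σ) = Sum.inl a := fun a => by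
      rw [← hEinl a]; exact E.symm_apply_apply _
    have hEsinr : ∀ b : β, E.symm (b : σ) = Sum.inr b := fun b => by
      rw [← hEinr b]; exact E.symm_apply_apply _
    set q₁ := Φ (rename (⇑E.symm) q) with hq₁def
    -- compatibility of Φ with renaming on the `α` variables
    have claim1 : ∀ (e : α → α) (p : MvPolynomial (α ⊕ β) K),
        rename e (Φ p) = Φ (rename (Sum.map e id) p) := by
      intro e p
      have h : ((rename (R := MvPolynomial β K) e).restrictScalars K).comp Φ.toAlgHom
          = Φ.toAlgHom.comp (rename (Sum.map e id)) := by
        apply MvPolynomial.algHom_ext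
        rintro (a | b) <;> simp [hΦ]
      exact DFunLike.congr_fun h p
    -- compatibility of Φ with renaming inside coefficients
    have claim2 : ∀ (φ : β → β) (p : MvPolynomial (α ⊕ β) K),
        MvPolynomial.map (rename (R := K) φ).toRingHom (Φ p)
          = Φ (rename (Sum.map id φ) p) := by
      intro φ p
      have h : (MvPolynomial.mapAlgHom (R := K) (rename (R := K) φ)).comp Φ.toAlgHom
          = Φ.toAlgHom.comp (rename (Sum.map id φ)) := by
        apply MvPolynomial.algHom_ext
        rintro (a | b) <;> simp [hΦ, MvPolynomial.mapAlgHom_apply]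
      have := DFunLike.congr_fun h p
      simpa [MvPolynomial.mapAlgHom_apply] using this
    have hsym : q₁.IsSymmetric := by
      intro e
      set eperm : Equiv.Perm σ := (E.symm.trans (Equiv.sumCongr e.symm (Equiv.refl β))).trans E
        with heperm
      have hpieperm : ∀ s, π (eperm s) = π s := by
        intro s
        rcases h : E.symm s with a | b
        · have hs : s = (a : σ) := by
            have := congrArg E h; simpa [hE] using this.trans (hEinl a)
          have h2 : eperm s = ((e.symm a : α) : σ) := by simp [heperm, h, hEinl, hEinr]
          rw [h2, hs, (e.symm a).prop, a.prop]
        · have h2 : eperm s = s := by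
            have hs : s = (b : σ) := by
              have := congrArg E h; simpa [hE] using this.trans (hEinr b)
            simp [heperm, h, hEinl, hEinr, ← hs]
        
          rw [h2]
      have key : (Sum.map ⇑e id ∘ ⇑E.symm) ∘ ⇑eperm = ⇑E.symm := by
        funext s
        rcases h : E.symm s with a | b <;>
          simp [heperm, h, Function.comp, hEinl, hEinr, hEsinl, hEsinr]
      calc rename ⇑e q₁
          = Φ (rename (Sum.map ⇑e id) (rename ⇑E.symm q)) := claim1 _ _
        _ = Φ (rename (Sum.map ⇑e id ∘ ⇑E.symm) q) := by rw [rename_rename]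
        _ = Φ (rename (Sum.map ⇑e id ∘ ⇑E.symm) (rename ⇑eperm q)) := by rw [hq eperm hpieperm]
        _ = Φ (rename ((Sum.map ⇑e id ∘ ⇑E.symm) ∘ ⇑eperm) q) := by rw [rename_rename]
        _ = q₁ := by rw [key, hq₁def]
    set n0 := Fintype.card α with hn0
    obtain ⟨Q, hQ⟩ := MvPolynomial.esymmAlgHom_surjective (σ := α)
      (R := MvPolynomial β K) (n := n0) le_rfl ⟨q₁, hsym⟩
    have hq₁ : q₁ = aeval (fun k : Fin n0 => esymm α (MvPolynomial β K) (k + 1)) Q := by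
      have := congrArg Subtype.val hQ
      rw [MvPolynomial.esymmAlgHom_apply] at this
      exact this.symm
    -- coefficients of Q are invariant
    have hcoeff : ∀ (φ : Equiv.Perm β), (∀ b : β, π ((φ b) : σ) = π (b : σ)) →
        ∀ m, rename (⇑φ) (MvPolynomial.coeff m Q) = MvPolynomial.coeff m Q := by
      intro φ hφ m
      set eperm : Equiv.Perm σ := (E.symm.trans (Equiv.sumCongr (Equiv.refl α) φ.symm)).trans E
        with heperm
      have hpieperm : ∀ s, π (eperm s) = π s := by
        intro s
        rcases h : E.symm s with a | b
        · have hs : s = (a : σ) := by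
            have := congrArg E h; simpa [hE] using this.trans (hEinl a)
          have h2 : eperm s = s := by simp [heperm, h, hEinl, hEinr, ← hs]
          rw [h2]
        · have hs : s = (b : σ) := by
            have := congrArg E h; simpa [hE] using this.trans (hEinr b)
          have h2 : eperm s = ((φ.symm b : β) : σ) := by simp [heperm, h, hEinl, hEinr]
          have h3 : π ((φ.symm b : β) : σ) = π (b : σ) := by
            have := hφ (φ.symm b); simpa using this.symm
          rw [h2, h3, ← hs]
      have key : (Sum.map id ⇑φ ∘ ⇑E.symm) ∘ ⇑eperm = ⇑E.symm := by
        funext s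
        rcases h : E.symm s with a | b <;>
          simp [heperm, h, Function.comp, hEinl, hEinr, hEsinl, hEsinr]
      have h1 : MvPolynomial.map (rename (R := K) ⇑φ).toRingHom q₁ = q₁ := by
        calc MvPolynomial.map (rename (R := K) ⇑φ).toRingHom q₁
            = Φ (rename (Sum.map id ⇑φ) (rename ⇑E.symm q)) := by
              rw [hq₁def]; exact claim2 _ _
          _ = Φ (rename (Sum.map id ⇑φ ∘ ⇑E.symm) q) := by rw [rename_rename]
          _ = Φ (rename (Sum.map id ⇑φ ∘ ⇑E.symm) (rename ⇑eperm q)) := by rw [hq eperm hpieperm]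
          _ = Φ (rename ((Sum.map id ⇑φ ∘ ⇑E.symm) ∘ ⇑eperm) q) := by rw [rename_rename]
          _ = q₁ := by rw [key, hq₁def]
      set g : Fin n0 → MvPolynomial α (MvPolynomial β K) :=
        fun k => esymm α (MvPolynomial β K) (k + 1) with hgdef
      have h2 : ∀ (P : MvPolynomial (Fin n0) (MvPolynomial β K)),
          MvPolynomial.map (rename (R := K) ⇑φ).toRingHom (aeval g P)
            = aeval g (MvPolynomial.map (rename (R := K) ⇑φ).toRingHom P) := by
        intro P
        induction P using MvPolynomial.induction_on with
        | C c => simp [MvPolynomial.algebraMap_eq]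
        | add p1 p2 hp1 hp2 => simp only [map_add, hp1, hp2]
        | mul_X p1 k hp1 =>
          simp only [map_mul, hp1, MvPolynomial.map_X, aeval_X, hgdef]
          rw [MvPolynomial.map_esymm]
          exact congrArg (· * _) hp1
      rw [hq₁] at h1
      rw [h2 Q] at h1
      have hQQ : MvPolynomial.map (rename (R := K) ⇑φ).toRingHom Q = Q := by
        apply MvPolynomial.esymmAlgHom_injective (σ := α) (R := MvPolynomial β K)
          (n := n0) le_rfl
        apply Subtype.ext
        rw [MvPolynomial.esymmAlgHom_apply, MvPolynomial.esymmAlgHom_apply]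
        rw [h1, ← hq₁]
      have := congrArg (MvPolynomial.coeff m) hQQ
      rwa [MvPolynomial.coeff_map] at this
    -- apply the inductive hypothesis to the coefficients
    set ι' := {i : ι // i ≠ i0} with hι'
    set π' : β → ι' := fun b => ⟨π b.val, b.prop⟩ with hπ'
    have hcard2 : Fintype.card ι' ≤ n := by
      have h1 : Fintype.card ι' = Fintype.card ι - 1 := by
        simp only [hι']
        rw [Fintype.card_subtype_compl, Fintype.card_subtype_eq]
      omega
    have hcm : ∀ m, MvPolynomial.coeff m Q ∈ Algebra.adjoin K
        {p : MvPolynomial β K | ∃ (i' : ι') (k : ℕ),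
          p = fesymm K (Finset.univ.filter (fun b => π' b = i')) k} := by
      intro m
      apply ih β ι' π' hcard2
      intro e he
      apply hcoeff e
      intro b
      exact congrArg Subtype.val (he b)
    -- reassemble
    set Θ : MvPolynomial α (MvPolynomial β K) →ₐ[K] MvPolynomial σ K :=
      (rename (⇑E : α ⊕ β → σ)).comp Φ.symm.toAlgHom with hΘ
    have hqTheta : q = Θ (aeval (fun k : Fin n0 => esymm α (MvPolynomial β K) (k + 1)) Q) := by
      rw [← hq₁, hΘ]
      simp only [AlgHom.comp_apply, AlgEquiv.toAlgHom_eq_coe, AlgHom.coe_coe]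
      rw [hq₁def, AlgEquiv.coe_algHom, AlgEquiv.symm_apply_apply, rename_rename]
      simp
    have hTC : ∀ c : MvPolynomial β K, Θ (MvPolynomial.C c)
        = rename (Subtype.val : β → σ) c := by
      intro c
      have h : Θ.comp (IsScalarTower.toAlgHom K (MvPolynomial β K)
          (MvPolynomial α (MvPolynomial β K))) = rename (Subtype.val : β → σ) := by
        apply MvPolynomial.algHom_ext
        intro b
        have h1 : Φ.symm (MvPolynomial.C (X b)) = X (Sum.inr b) := by
          rw [AlgEquiv.symm_apply_eq]; simp [hΦ]
        simp [hΘ, h1, hEinr, MvPolynomial.algebraMap_eq]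
      exact DFunLike.congr_fun h c
    have hTmapC : ∀ p : MvPolynomial α K,
        Θ (MvPolynomial.map (MvPolynomial.C : K →+* MvPolynomial β K) p)
          = rename (Subtype.val : α → σ) p := by
      intro p
      induction p using MvPolynomial.induction_on with
      | C c => rw [MvPolynomial.map_C, hTC]; simp
      | add p1 p2 h1 h2 => simp only [map_add, h1, h2]
      | mul_X p1 a h1 =>
        rw [map_mul, MvPolynomial.map_X, map_mul, h1, map_mul]
        congr 1
        have h2 : Φ.symm (X a) = X (Sum.inl a) := by
          rw [AlgEquiv.symm_apply_eq]; simp [hΦ]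
        simp [hΘ, h2, hEinl]
    have hfilter0 : (Finset.univ : Finset α).map
          (Function.Embedding.subtype (fun s => π s = i0))
        = Finset.univ.filter (fun s => π s = i0) := by
      ext t
      simp only [Finset.mem_map, Finset.mem_filter, Finset.mem_univ, true_and,
        Function.Embedding.coe_subtype]
      constructor
      · rintro ⟨b, _, rfl⟩; exact b.prop
      · intro ht; exact ⟨⟨t, ht⟩, rfl⟩
    have hTesymm : ∀ k : ℕ, Θ (esymm α (MvPolynomial β K) k)
        = fesymm K (Finset.univ.filter (fun s => π s = i0)) k := by
      intro k
      rw [show esymm α (MvPolynomial β K) k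
          = MvPolynomial.map (MvPolynomial.C : K →+* MvPolynomial β K) (esymm α K k) from
          (MvPolynomial.map_esymm (σ := α) (R := K) (S := MvPolynomial β K) (n := k) (f := MvPolynomial.C)).symm,
        hTmapC, esymm_eq_fesymm]
      rw [show (Subtype.val : α → σ)
        = ⇑(Function.Embedding.subtype (fun s => π s = i0)) from rfl]
      rw [rename_fesymm, hfilter0]
    have hmono : ∀ c : MvPolynomial β K, c ∈ Algebra.adjoin K
          {p : MvPolynomial β K | ∃ (i' : ι') (k : ℕ),
            p = fesymm K (Finset.univ.filter (fun b => π' b = i')) k} →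
        rename (Subtype.val : β → σ) c ∈ Algebra.adjoin K
          {p : MvPolynomial σ K | ∃ (i : ι) (k : ℕ),
            p = fesymm K (Finset.univ.filter (fun s => π s = i)) k} := by
      intro c hc
      have h1 : rename (Subtype.val : β → σ) c ∈
          (Algebra.adjoin K {p : MvPolynomial β K | ∃ (i' : ι') (k : ℕ),
            p = fesymm K (Finset.univ.filter (fun b => π' b = i')) k}).map
            (rename (Subtype.val : β → σ)) :=
        Subalgebra.mem_map.mpr ⟨c, hc, rfl⟩
      rw [AlgHom.map_adjoin] at h1
      refine Algebra.adjoin_mono ?_ h1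
      rintro _ ⟨_, ⟨i', k, rfl⟩, rfl⟩
      refine ⟨i'.val, k, ?_⟩
      rw [show (Subtype.val : β → σ)
        = ⇑(Function.Embedding.subtype (fun s => ¬ π s = i0)) from rfl, rename_fesymm]
      congr 1
      ext t
      simp only [Finset.mem_map, Finset.mem_filter, Finset.mem_univ, true_and,
        Function.Embedding.coe_subtype]
      constructor
      · rintro ⟨b, hb, rfl⟩
        exact congrArg Subtype.val hb
      · intro ht
        refine ⟨⟨t, ?_⟩, ?_, rfl⟩
        · rw [ht]; exact i'.prop
        · exact Subtype.ext ht
    rw [hqTheta, Q.as_sum, map_sum, map_sum]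
    apply Subalgebra.sum_mem
    intro m hm
    rw [aeval_monomial, map_mul]
    apply Subalgebra.mul_mem
    · rw [MvPolynomial.algebraMap_eq, hTC]
      exact hmono _ (hcm m)
    · rw [Finsupp.prod, map_prod]
      apply Subalgebra.prod_mem
      intro k hk
      rw [map_pow]
      apply Subalgebra.pow_mem
      rw [hTesymm]
      exact Algebra.subset_adjoin ⟨i0, _, rfl⟩

end Cor62

namespace Cor62

section SigmaPerm

variable {r : ℕ} {nb : Fin r → ℕ}

lemma sigma_fin_ext {s t : Σ i : Fin r, Fin (nb i)} (h1 : s.1 = t.1)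
    (h2 : (s.2 : ℕ) = (t.2 : ℕ)) : s = t := by
  rcases s with ⟨i, j⟩; rcases t with ⟨i', j'⟩
  cases h1
  exact congrArg (Sigma.mk i) (Fin.ext h2)

lemma permOfFst (e : Equiv.Perm (Σ i : Fin r, Fin (nb i))) (he : ∀ s, (e s).1 = s.1) :
    ∃ τ : ∀ i, Equiv.Perm (Fin (nb i)), (⇑(Equiv.sigmaCongrRight τ) = ⇑e) ∧
      ∀ i (j : Fin (nb i)), ((τ i j : Fin (nb i)) : ℕ) = ((e ⟨i, j⟩).2 : ℕ) := by
  have hm : ∀ i, Function.Injective (fun j : Fin (nb i) =>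
      Fin.cast (congrArg nb (he ⟨i, j⟩)) (e ⟨i, j⟩).2) := by
    intro i j j' hjj
    have hval : ((e ⟨i, j⟩).2 : ℕ) = ((e ⟨i, j'⟩).2 : ℕ) := by
      simpa using congrArg Fin.val hjj
    have hee : e ⟨i, j⟩ = e ⟨i, j'⟩ :=
      sigma_fin_ext (by rw [he ⟨i, j⟩, he ⟨i, j'⟩]) hval
    have h2 := e.injective hee
    exact Fin.ext (congrArg (fun s : Σ i : Fin r, Fin (nb i) => (s.2 : ℕ)) h2)
  refine ⟨fun i => Equiv.ofBijective _ ((Finite.injective_iff_bijective).1 (hm i)), ?_, ?_⟩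
  · funext s
    rcases s with ⟨i, j⟩
    apply sigma_fin_ext
    · exact (he ⟨i, j⟩).symm
    · rfl
  · intro i j
    simp [Equiv.ofBijective]

end SigmaPerm

section StabStruct

variable {K : Type*} [CommRing K] {r : ℕ} {nb : Fin r → ℕ}

lemma stab_struct (i0 : Fin r) (j0 : Fin (nb i0))
    (q : MvPolynomial (Σ i : Fin r, Fin (nb i)) K)
    (hq : ∀ τ : ∀ i, Equiv.Perm (Fin (nb i)), τ i0 j0 = j0 →
      rename (Equiv.sigmaCongrRight τ) q = q) :
    ∃ b : Fin (nb i0) → MvPolynomial (Σ i : Fin r, Fin (nb i)) K,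
      (∀ k (τ : ∀ i, Equiv.Perm (Fin (nb i))),
        rename (Equiv.sigmaCongrRight τ) (b k) = b k) ∧
      q = ∑ k : Fin (nb i0), b k * X (⟨i0, j0⟩ : Σ i : Fin r, Fin (nb i)) ^ (k : ℕ) := by
  classical
  set s0 : Σ i : Fin r, Fin (nb i) := ⟨i0, j0⟩ with hs0
  set x : MvPolynomial (Σ i : Fin r, Fin (nb i)) K := X s0 with hx
  set Inv : MvPolynomial (Σ i : Fin r, Fin (nb i)) K → Prop := fun c =>
    ∀ τ : ∀ i, Equiv.Perm (Fin (nb i)), rename (Equiv.sigmaCongrRight τ) c = c with hInv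
  set P : MvPolynomial (Σ i : Fin r, Fin (nb i)) K → Prop := fun w =>
    ∃ b : Fin (nb i0) → MvPolynomial (Σ i : Fin r, Fin (nb i)) K,
      (∀ k, Inv (b k)) ∧ w = ∑ k : Fin (nb i0), b k * x ^ (k : ℕ) with hPdef
  have hpos : 0 < nb i0 := lt_of_le_of_lt (Nat.zero_le _) j0.isLt
  -- closure properties
  have Pzero : P 0 := ⟨fun _ => 0, fun _ _ => map_zero _, by simp⟩
  have Padd : ∀ {w w'}, P w → P w' → P (w + w') := by
    rintro w w' ⟨b, hb, rfl⟩ ⟨b', hb', rfl⟩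
    refine ⟨fun k => b k + b' k, fun k τ => by rw [map_add, hb k τ, hb' k τ], ?_⟩
    rw [← Finset.sum_add_distrib]
    exact Finset.sum_congr rfl fun k _ => by ring
  have Pneg : ∀ {w}, P w → P (-w) := by
    rintro w ⟨b, hb, rfl⟩
    refine ⟨fun k => -(b k), fun k τ => by rw [map_neg, hb k τ], ?_⟩
    rw [← Finset.sum_neg_distrib]
    exact Finset.sum_congr rfl fun k _ => by ring
  have Psub : ∀ {w w'}, P w → P w' → P (w - w') := by
    intro w w' h1 h2
    rw [sub_eq_add_neg]; exact Padd h1 (Pneg h2)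
  have Psingle : ∀ (k0 : Fin (nb i0)) (c), Inv c → P (c * x ^ (k0 : ℕ)) := by
    intro k0 c hc
    refine ⟨fun k => if k = k0 then c else 0, ?_, ?_⟩
    · intro k τ
      by_cases h : k = k0 <;> simp [h, hc τ]
    · rw [show (∑ k : Fin (nb i0), (if k = k0 then c else 0) * x ^ (k : ℕ))
          = ∑ k : Fin (nb i0), (if k = k0 then c * x ^ (k : ℕ) else 0) from
          Finset.sum_congr rfl fun k _ => by split_ifs <;> simp]
      rw [Finset.sum_ite_eq' Finset.univ k0 (fun k => c * x ^ (k : ℕ))]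
      simp
  have Pinv : ∀ c, Inv c → P c := by
    intro c hc
    have := Psingle ⟨0, hpos⟩ c hc
    simpa using this
  have Psmul : ∀ (c) {w}, Inv c → P w → P (c * w) := by
    rintro c w hc ⟨b, hb, rfl⟩
    refine ⟨fun k => c * b k, fun k τ => by rw [map_mul, hc τ, hb k τ], ?_⟩
    rw [Finset.mul_sum]
    exact Finset.sum_congr rfl fun k _ => by ring
  have Psum : ∀ {γ : Type} (s : Finset γ) (F : γ → MvPolynomial (Σ i : Fin r, Fin (nb i)) K),
      (∀ j ∈ s, P (F j)) → P (∑ j ∈ s, F j) := by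
    intro γ s F hF
    induction s using Finset.induction_on with
    | empty => simpa using Pzero
    | insert _ _ hnotmem ih =>
      rw [Finset.sum_insert hnotmem]
      exact Padd (hF _ (Finset.mem_insert_self _ _))
        (ih fun j hj => hF j (Finset.mem_insert_of_mem hj))
  -- block finsets and invariance of their esymms
  set B : Finset (Σ i : Fin r, Fin (nb i)) :=
    Finset.univ.filter (fun s => s.1 = i0) with hB
  have hs0B : s0 ∈ B := by simp [hB, hs0]
  have hBcard : B.card = nb i0 := by
    have hBeq : B = Finset.univ.map
        ⟨fun j : Fin (nb i0) => (⟨i0, j⟩ : Σ i : Fin r, Fin (nb i)), fun a b h => by simpa using h⟩ := by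
      ext ⟨i, j⟩
      simp only [hB, Finset.mem_filter, Finset.mem_univ, true_and, Finset.mem_map,
        Function.Embedding.coeFn_mk]
      constructor
      · rintro rfl; exact ⟨j, rfl⟩
      · rintro ⟨j', hj'⟩
        exact congrArg Sigma.fst hj'.symm
    rw [hBeq, Finset.card_map, Finset.card_univ, Fintype.card_fin]
  have hfesymmInv : ∀ (i : Fin r) (k : ℕ),
      Inv (fesymm K (Finset.univ.filter (fun s => s.1 = i)) k) := by
    intro i k τ
    apply rename_perm_fesymm
    intro s hs
    simp only [Finset.mem_filter, Finset.mem_univ, true_and] at hs ⊢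
    rcases s with ⟨i', j'⟩
    simpa using hs
  have hBInv : ∀ k, Inv (fesymm K B k) := fun k => hfesymmInv i0 k
  -- powers of x
  have Ppow : ∀ m, P (x ^ m) := by
    intro m
    induction m using Nat.strong_induction_on with
    | _ m ihm =>
      rcases Nat.lt_or_ge m (nb i0) with hmn | hmn
      · have := Psingle ⟨m, hmn⟩ 1 (fun τ => map_one _)
        simpa using this
      · have hvieta : x ^ (nb i0) = ∑ j ∈ Finset.range (nb i0),
            (-1 : MvPolynomial (Σ i : Fin r, Fin (nb i)) K) ^ j * fesymm K B (j + 1)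
              * x ^ (nb i0 - 1 - j) := by
          have h := X_pow_card_eq (K := K) hs0B
          rw [hBcard] at h
          exact h
        have hxm : x ^ m = ∑ j ∈ Finset.range (nb i0),
            ((-1 : MvPolynomial (Σ i : Fin r, Fin (nb i)) K) ^ j * fesymm K B (j + 1))
              * x ^ (m - nb i0 + (nb i0 - 1 - j)) := by
          calc x ^ m = x ^ (m - nb i0) * x ^ (nb i0) := by
                rw [← pow_add]; congr 1; omega
            _ = _ := by
                rw [hvieta, Finset.mul_sum]
                refine Finset.sum_congr rfl fun j _ => ?_
                rw [pow_add]; ring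
        rw [hxm]
        apply Psum
        intro j hj
        rw [Finset.mem_range] at hj
        refine Psmul _ ?_ (ihm _ (by omega))
        intro τ
        rw [map_mul, map_pow, map_neg, map_one, hBInv (j + 1)]
  have Px : P x := by simpa using Ppow 1
  have Pone : P 1 := by simpa using Ppow 0
  have Pmul : ∀ {w w'}, P w → P w' → P (w * w') := by
    rintro w w' ⟨b, hb, rfl⟩ ⟨b', hb', rfl⟩
    rw [Finset.sum_mul_sum]
    apply Psum
    intro k _
    apply Psum
    intro l _
    have he : b k * x ^ (k : ℕ) * (b' l * x ^ (l : ℕ))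
        = (b k * b' l) * x ^ ((k : ℕ) + (l : ℕ)) := by rw [pow_add]; ring
    rw [he]
    exact Psmul _ (fun τ => by rw [map_mul, hb k τ, hb' l τ]) (Ppow _)
  -- the subalgebra of P-elements
  set A : Subalgebra K (MvPolynomial (Σ i : Fin r, Fin (nb i)) K) :=
    { carrier := setOf P
      mul_mem' := fun ha hb => Pmul ha hb
      add_mem' := fun ha hb => Padd ha hb
      one_mem' := Pone
      zero_mem' := Pzero
      algebraMap_mem' := fun c => by
        have : Inv (C c : MvPolynomial (Σ i : Fin r, Fin (nb i)) K) := fun τ => rename_C _ c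
        exact Pinv _ this } with hA
  -- the refined fibration
  set π' : (Σ i : Fin r, Fin (nb i)) → Option (Fin r) :=
    fun s => if s = s0 then none else some s.1 with hπ'
  have hhyp : ∀ e : Equiv.Perm (Σ i : Fin r, Fin (nb i)),
      (∀ s, π' (e s) = π' s) → rename (⇑e) q = q := by
    intro e he
    have hes0 : e s0 = s0 := by
      have h1 : π' (e s0) = none := by rw [he s0]; simp [hπ']
      by_contra hne
      simp [hπ', hne] at h1
    have hefst : ∀ s, (e s).1 = s.1 := by
      intro s
      by_cases hs : s = s0
      · rw [hs, hes0]
      · have h1 : π' (e s) = some s.1 := by rw [he s]; simp [hπ', hs]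
        by_cases hs' : e s = s0
        · rw [hs'] at h1; simp [hπ'] at h1
        · simpa [hπ', hs'] using h1
    obtain ⟨τ, hτcoe, hτval⟩ := permOfFst e hefst
    have hτj0 : τ i0 j0 = j0 := by
      apply Fin.ext
      rw [hτval i0 j0]
      have : e ⟨i0, j0⟩ = ⟨i0, j0⟩ := hes0
      rw [this]
    have := hq τ hτj0
    rwa [show ⇑(Equiv.sigmaCongrRight τ) = ⇑e from hτcoe] at this
  have hqmem := invN (K := K) (Fintype.card (Option (Fin r)))
    (Σ i : Fin r, Fin (nb i)) (Option (Fin r)) π' le_rfl q hhyp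
  -- the generators lie in A
  have hfib_none : Finset.univ.filter (fun s => π' s = none) = {s0} := by
    ext t
    simp only [Finset.mem_filter, Finset.mem_univ, true_and, Finset.mem_singleton, hπ']
    split_ifs with h
    · simp [h]
    · simp [h]
  have hfib_some : ∀ i : Fin r, i ≠ i0 →
      Finset.univ.filter (fun s => π' s = some i)
        = Finset.univ.filter (fun s : Σ i : Fin r, Fin (nb i) => s.1 = i) := by
    intro i hi
    ext t
    simp only [Finset.mem_filter, Finset.mem_univ, true_and, hπ']
    split_ifs with h
    · subst h
      constructor
      · intro h'; exact h'.elim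
      · intro h'; exact absurd h'.symm hi
    · simp
  have hfib_i0 : Finset.univ.filter (fun s => π' s = some i0) = B.erase s0 := by
    ext t
    simp only [Finset.mem_filter, Finset.mem_univ, true_and, hπ', Finset.mem_erase, hB]
    split_ifs with h
    · simp [h]
    · simp [h]
  have herase : ∀ k, P (fesymm K (B.erase s0) k) := by
    intro k
    induction k with
    | zero => simpa using Pone
    | succ k ihk =>
      have hrec := fesymm_recurrence (K := K) hs0B k
      have heq : fesymm K (B.erase s0) (k + 1)
          = fesymm K B (k + 1) - x * fesymm K (B.erase s0) k := by
        rw [hrec]; ring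
      rw [heq]
      exact Psub (Pinv _ (hBInv (k + 1))) (Pmul Px ihk)
  have hgens : {p : MvPolynomial (Σ i : Fin r, Fin (nb i)) K | ∃ (o : Option (Fin r)) (k : ℕ),
      p = fesymm K (Finset.univ.filter (fun s => π' s = o)) k} ⊆ A := by
    rintro p ⟨o, k, rfl⟩
    rcases o with _ | i
    · rw [hfib_none]
      match k with
      | 0 => simpa using Pone
      | 1 =>
        rw [fesymm_singleton_one]
        exact Px
      | (k + 2) =>
        rw [fesymm_eq_zero _ (by simp)]
        exact Pzero
    · by_cases hi : i = i0
      · subst hi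
        rw [hfib_i0]
        exact herase k
      · rw [hfib_some i hi]
        exact Pinv _ (hfesymmInv i k)
  have hqA : q ∈ A := Algebra.adjoin_le hgens hqmem
  exact hqA

end StabStruct

end Cor62


/-- Corollary 6.2: with variables `x_{i,j}` partitioned into `r` blocks of
sizes `nb i` (indexed by the sigma type `Σ i, Fin (nb i)`), the Young subgroup
`G = S_{n₁} × ⋯ × S_{n_r}` acting block-wise, and `f` a homogeneous regular
sequence with `fᵢ^σ = f_{σ(i)}` for `σ ∈ G`, define
`g_{i,k} = ∑ⱼ x_{i,j}^k · f_{i,j}` (the block-diagonal Vandermonde transform).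
Then `(g) = (f) ∩ R^G` as ideals of the invariant ring `R^G`: an invariant
polynomial lies in `(f₁,…,fₙ)` iff it is a combination of the `g`'s with
`G`-invariant coefficients. -/
theorem block_vandermonde_generators_of_invariant_ideal
    (K : Type*) [Field K] [CharZero K] (r : ℕ) (nb : Fin r → ℕ)
    (f : (Σ i : Fin r, Fin (nb i)) → MvPolynomial (Σ i : Fin r, Fin (nb i)) K)
    (hhom : ∀ idx, ∃ d, (f idx).IsHomogeneous d)
    (hreg : RingTheory.Sequence.IsRegular (MvPolynomial (Σ i : Fin r, Fin (nb i)) K)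
      (Finset.univ.toList.map f))
    (hequiv : ∀ (τ : ∀ i, Equiv.Perm (Fin (nb i))) (idx : Σ i : Fin r, Fin (nb i)),
      rename (Equiv.sigmaCongrRight τ) (f idx) = f (Equiv.sigmaCongrRight τ idx))
    (g : (Σ i : Fin r, Fin (nb i)) → MvPolynomial (Σ i : Fin r, Fin (nb i)) K)
    (hg : ∀ i : Fin r, ∀ k : Fin (nb i), g ⟨i, k⟩
      = ∑ j : Fin (nb i), (X (⟨i, j⟩ : Σ i : Fin r, Fin (nb i)) :
          MvPolynomial (Σ i : Fin r, Fin (nb i)) K) ^ (k : ℕ) * f ⟨i, j⟩) :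
    ∀ p : MvPolynomial (Σ i : Fin r, Fin (nb i)) K,
      (∀ τ : ∀ i, Equiv.Perm (Fin (nb i)), rename (Equiv.sigmaCongrRight τ) p = p) →
      (p ∈ Ideal.span (Set.range f) ↔
        ∃ c : (Σ i : Fin r, Fin (nb i)) → MvPolynomial (Σ i : Fin r, Fin (nb i)) K,
          (∀ idx, ∀ τ : ∀ i, Equiv.Perm (Fin (nb i)),
            rename (Equiv.sigmaCongrRight τ) (c idx) = c idx) ∧
          p = ∑ idx : Σ i : Fin r, Fin (nb i), c idx * g idx) := by
  classical
  intro p hp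
  constructor
  · -- forward direction
    intro hmem
    obtain ⟨h, hsum⟩ := Ideal.mem_span_range_iff_exists_fun.mp hmem
    set N : ℕ := Fintype.card (∀ i : Fin r, Equiv.Perm (Fin (nb i))) with hN
    have hN0 : (N : K) ≠ 0 := Nat.cast_ne_zero.mpr Fintype.card_ne_zero
    set h' : (Σ i : Fin r, Fin (nb i)) → MvPolynomial (Σ i : Fin r, Fin (nb i)) K := fun s =>
      (N : K)⁻¹ • ∑ τ : ∀ i : Fin r, Equiv.Perm (Fin (nb i)),
        rename (Equiv.sigmaCongrRight τ) (h ((Equiv.sigmaCongrRight τ).symm s)) with hh'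
    have hgrp : ∀ (σ τ : ∀ i : Fin r, Equiv.Perm (Fin (nb i))) (s),
        Equiv.sigmaCongrRight (σ * τ) s
          = Equiv.sigmaCongrRight σ (Equiv.sigmaCongrRight τ s) := fun _ _ _ => rfl
    have h_act : ∀ (σ τ : ∀ i : Fin r, Equiv.Perm (Fin (nb i)))
        (w : MvPolynomial (Σ i : Fin r, Fin (nb i)) K),
        rename (Equiv.sigmaCongrRight σ) (rename (Equiv.sigmaCongrRight τ) w)
          = rename (Equiv.sigmaCongrRight (σ * τ)) w := by
      intro σ τ w
      rw [rename_rename]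
      rfl
    have hsymm : ∀ (σ τ : ∀ i : Fin r, Equiv.Perm (Fin (nb i))) (s),
        (Equiv.sigmaCongrRight τ).symm s
          = (Equiv.sigmaCongrRight (σ * τ)).symm (Equiv.sigmaCongrRight σ s) := by
      intro σ τ s
      apply (Equiv.sigmaCongrRight (σ * τ)).injective
      rw [Equiv.apply_symm_apply, hgrp, Equiv.apply_symm_apply]
    have hstep : ∀ τ : ∀ i : Fin r, Equiv.Perm (Fin (nb i)),
        ∑ s : Σ i : Fin r, Fin (nb i),
          rename (Equiv.sigmaCongrRight τ) (h ((Equiv.sigmaCongrRight τ).symm s)) * f s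
          = p := by
      intro τ
      have hre : ∑ t : Σ i : Fin r, Fin (nb i),
          rename (Equiv.sigmaCongrRight τ) (h t) * f (Equiv.sigmaCongrRight τ t)
          = ∑ s : Σ i : Fin r, Fin (nb i),
            rename (Equiv.sigmaCongrRight τ) (h ((Equiv.sigmaCongrRight τ).symm s)) * f s := by
        apply Fintype.sum_equiv (Equiv.sigmaCongrRight τ)
        intro t
        rw [Equiv.symm_apply_apply]
      rw [← hre]
      calc ∑ t : Σ i : Fin r, Fin (nb i),
            rename (Equiv.sigmaCongrRight τ) (h t) * f (Equiv.sigmaCongrRight τ t)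
          = ∑ t : Σ i : Fin r, Fin (nb i),
            rename (Equiv.sigmaCongrRight τ) (h t * f t) := by
            refine Finset.sum_congr rfl fun t _ => ?_
            rw [map_mul, hequiv τ t]
        _ = rename (Equiv.sigmaCongrRight τ) (∑ t : Σ i : Fin r, Fin (nb i), h t * f t) :=
            (map_sum _ _ _).symm
        _ = p := by rw [hsum, hp τ]
    have hsum' : ∑ s : Σ i : Fin r, Fin (nb i), h' s * f s = p := by
      have h1 : ∑ s : Σ i : Fin r, Fin (nb i), h' s * f s
          = (N : K)⁻¹ • ∑ τ : ∀ i : Fin r, Equiv.Perm (Fin (nb i)),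
              ∑ s : Σ i : Fin r, Fin (nb i),
                rename (Equiv.sigmaCongrRight τ) (h ((Equiv.sigmaCongrRight τ).symm s)) * f s
            := by
        simp only [hh', smul_mul_assoc, Finset.sum_mul]
        rw [← Finset.smul_sum, Finset.sum_comm]
      rw [h1, Finset.sum_congr rfl fun τ _ => hstep τ, Finset.sum_const, Finset.card_univ,
        ← hN, ← Nat.cast_smul_eq_nsmul K, smul_smul, inv_mul_cancel₀ hN0, one_smul]
    have hequivar : ∀ (σ : ∀ i : Fin r, Equiv.Perm (Fin (nb i))) (s),
        rename (Equiv.sigmaCongrRight σ) (h' s) = h' (Equiv.sigmaCongrRight σ s) := by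
      intro σ s
      simp only [hh']
      rw [MvPolynomial.smul_eq_C_mul, map_mul, rename_C, map_sum, ← MvPolynomial.smul_eq_C_mul]
      congr 1
      apply Fintype.sum_equiv (Equiv.mulLeft σ)
      intro τ
      simp only [Equiv.coe_mulLeft]
      rw [h_act σ τ, ← hsymm σ τ s]
    have hstab : ∀ (i : Fin r) (j0 : Fin (nb i)) (τ : ∀ i : Fin r, Equiv.Perm (Fin (nb i))),
        τ i j0 = j0 →
        rename (Equiv.sigmaCongrRight τ) (h' ⟨i, j0⟩) = h' ⟨i, j0⟩ := by
      intro i j0 τ hτ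
      rw [hequivar τ ⟨i, j0⟩]
      congr 1
      show (⟨i, τ i j0⟩ : Σ i : Fin r, Fin (nb i)) = ⟨i, j0⟩
      rw [hτ]
    have hblock : ∀ i : Fin r, ∃ b : Fin (nb i) → MvPolynomial (Σ i : Fin r, Fin (nb i)) K,
        (∀ k (τ : ∀ i : Fin r, Equiv.Perm (Fin (nb i))),
          rename (Equiv.sigmaCongrRight τ) (b k) = b k) ∧
        (∀ j : Fin (nb i), h' ⟨i, j⟩
          = ∑ k : Fin (nb i), b k * X (⟨i, j⟩ : Σ i : Fin r, Fin (nb i)) ^ (k : ℕ)) := by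
      intro i
      rcases Nat.eq_zero_or_pos (nb i) with hz | hpos
      · exact ⟨fun k => absurd k.isLt (by omega), fun k => absurd k.isLt (by omega),
          fun j => absurd j.isLt (by omega)⟩
      · obtain ⟨b, hbinv, hbeq⟩ := Cor62.stab_struct i ⟨0, hpos⟩ (h' ⟨i, ⟨0, hpos⟩⟩)
          (fun τ hτ => hstab i ⟨0, hpos⟩ τ hτ)
        refine ⟨b, hbinv, ?_⟩
        intro j
        set τ : ∀ i' : Fin r, Equiv.Perm (Fin (nb i')) :=
          Function.update (fun i' => 1) i (Equiv.swap ⟨0, hpos⟩ j) with hτdef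
        have hτi : τ i = Equiv.swap ⟨0, hpos⟩ j := Function.update_self _ _ _
        have h1 : Equiv.sigmaCongrRight τ ⟨i, ⟨0, hpos⟩⟩ = ⟨i, j⟩ := by
          show (⟨i, τ i ⟨0, hpos⟩⟩ : Σ i : Fin r, Fin (nb i)) = ⟨i, j⟩
          rw [hτi, Equiv.swap_apply_left]
        calc h' ⟨i, j⟩ = h' (Equiv.sigmaCongrRight τ ⟨i, ⟨0, hpos⟩⟩) := by rw [h1]
          _ = rename (Equiv.sigmaCongrRight τ) (h' ⟨i, ⟨0, hpos⟩⟩) :=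
              (hequivar τ ⟨i, ⟨0, hpos⟩⟩).symm
          _ = rename (Equiv.sigmaCongrRight τ) (∑ k : Fin (nb i),
              b k * X (⟨i, ⟨0, hpos⟩⟩ : Σ i : Fin r, Fin (nb i)) ^ (k : ℕ)) := by rw [hbeq]
          _ = ∑ k : Fin (nb i), b k * X (⟨i, j⟩ : Σ i : Fin r, Fin (nb i)) ^ (k : ℕ) := by
              rw [map_sum]
              refine Finset.sum_congr rfl fun k _ => ?_
              rw [map_mul, map_pow, hbinv k τ, rename_X, h1]
    choose bfam hbinv hbeq using hblock
    refine ⟨fun s => bfam s.1 s.2, fun idx τ => hbinv idx.1 idx.2 τ, ?_⟩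
    calc p = ∑ s : Σ i : Fin r, Fin (nb i), h' s * f s := hsum'.symm
      _ = ∑ i : Fin r, ∑ j : Fin (nb i), h' ⟨i, j⟩ * f ⟨i, j⟩ := by
          rw [← Finset.univ_sigma_univ, Finset.sum_sigma]
      _ = ∑ i : Fin r, ∑ k : Fin (nb i), bfam i k * g ⟨i, k⟩ := by
          refine Finset.sum_congr rfl fun i _ => ?_
          calc ∑ j : Fin (nb i), h' ⟨i, j⟩ * f ⟨i, j⟩
              = ∑ j : Fin (nb i), ∑ k : Fin (nb i),
                  bfam i k * X (⟨i, j⟩ : Σ i : Fin r, Fin (nb i)) ^ (k : ℕ) * f ⟨i, j⟩ := by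
                refine Finset.sum_congr rfl fun j _ => ?_
                rw [hbeq i j, Finset.sum_mul]
            _ = ∑ k : Fin (nb i), ∑ j : Fin (nb i),
                  bfam i k * X (⟨i, j⟩ : Σ i : Fin r, Fin (nb i)) ^ (k : ℕ) * f ⟨i, j⟩ :=
                Finset.sum_comm
            _ = ∑ k : Fin (nb i), bfam i k * g ⟨i, k⟩ := by
                refine Finset.sum_congr rfl fun k _ => ?_
                rw [hg i k, Finset.mul_sum]
                refine Finset.sum_congr rfl fun j _ => by ring
      _ = ∑ idx : Σ i : Fin r, Fin (nb i), bfam idx.1 idx.2 * g idx := by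
          rw [← Finset.univ_sigma_univ, Finset.sum_sigma]
  · -- backward direction
    rintro ⟨c, hcinv, rfl⟩
    apply Ideal.sum_mem
    intro idx _
    rcases idx with ⟨i, k⟩
    rw [hg i k, Finset.mul_sum]
    apply Ideal.sum_mem
    intro j _
    have hfmem : f ⟨i, j⟩ ∈ Ideal.span (Set.range f) := Ideal.subset_span ⟨⟨i, j⟩, rfl⟩
    exact Ideal.mul_mem_left _ _ (Ideal.mul_mem_left _ _ hfmem)
end Cor62Aux
end
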